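/- arXiv:1303.0817 — 3 statements merged into one kernel-verified Lean document; each statement's English description precedes it below -/
import Mathlib

section
/- One bit of cooperation can reduce the sum rate arbitrarily (Example 1). Fix a natural number b ≥ 1. Let X be uniformly distributed over {1,2,3,4}, let Y = (Y_1,Y_2,Y_3,Y_4) where the Y_j are i.i.d. uniform over {1,…,2^b} and independent of X, and let f(x,(y_1,y_2,y_3,y_4)) = (x, y_x). Then: (i) the rate tuple (R_0,R_X,R_Y) = (1, 2, 2b) belongs to the rate region; (ii) every tuple (0, R_X, R_Y) in the rate region satisfies R_X + R_Y ≥ 2 + 4b. Consequently one bit per symbol of cooperation decreases the minimum achievable sum rate R_X+R_Y by at least 2b bits. -/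
open scoped BigOperators Classical

section Preliminaries

variable {Ω : Type*} [Fintype Ω]

/-- The probability mass function of the random variable `X : Ω → α` under the
weight function `μ` on the finite sample space `Ω`. -/
noncomputable def pm {α : Type*} (μ : Ω → ℝ) (X : Ω → α) (a : α) : ℝ :=
  ∑ ω, if X ω = a then μ ω else 0

/-- `μ` is a probability mass function on the finite sample space `Ω`. -/
def IsPMF (μ : Ω → ℝ) : Prop := (∀ ω, 0 ≤ μ ω) ∧ ∑ ω, μ ω = 1

/-- Shannon entropy (in bits) of the random variable `X` under `μ`. -/
noncomputable def ent {α : Type*} [Fintype α] (μ : Ω → ℝ) (X : Ω → α) : ℝ :=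
  - ∑ a, pm μ X a * Real.logb 2 (pm μ X a)

/-- Conditional Shannon entropy H(X|Y) (in bits). -/
noncomputable def condEnt {α β : Type*} [Fintype α] [Fintype β] (μ : Ω → ℝ)
    (X : Ω → α) (Y : Ω → β) : ℝ :=
  ent μ (fun ω => (X ω, Y ω)) - ent μ Y

/-- Mutual information I(X;Y) (in bits). -/
noncomputable def mi {α β : Type*} [Fintype α] [Fintype β] (μ : Ω → ℝ)
    (X : Ω → α) (Y : Ω → β) : ℝ :=
  ent μ X + ent μ Y - ent μ (fun ω => (X ω, Y ω))

/-- Conditional mutual information I(X;Y|Z) (in bits). -/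
noncomputable def condMI {α β γ : Type*} [Fintype α] [Fintype β] [Fintype γ] (μ : Ω → ℝ)
    (X : Ω → α) (Y : Ω → β) (Z : Ω → γ) : ℝ :=
  condEnt μ X Z - condEnt μ X (fun ω => (Y ω, Z ω))

/-- `A` and `C` are conditionally independent given `B`
(the Markov chain A − B − C). -/
def CondIndepRV {α β γ : Type*} (μ : Ω → ℝ) (A : Ω → α) (B : Ω → β) (C : Ω → γ) : Prop :=
  ∀ a b c, pm μ (fun ω => (A ω, B ω, C ω)) (a, b, c) * pm μ B b
    = pm μ (fun ω => (A ω, B ω)) (a, b) * pm μ (fun ω => (B ω, C ω)) (b, c)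

/-- The conditional characteristic graph `G_{L|K}(f)` of `L` given `K`, with respect to
the source variable `S` and the function `f`: vertices `l₁ ≠ l₂` are adjacent iff there
are `k, s₁, s₂` with `p(l₁,k,s₁) ⬝ p(l₂,k,s₂) > 0` and `f s₁ ≠ f s₂`. -/
def charGraph {α β σ γ : Type*} (μ : Ω → ℝ) (L : Ω → α) (K : Ω → β) (S : Ω → σ)
    (f : σ → γ) : SimpleGraph α where
  Adj l₁ l₂ := l₁ ≠ l₂ ∧ ∃ k s₁ s₂,
    0 < pm μ (fun ω => (L ω, K ω, S ω)) (l₁, k, s₁) ∧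
    0 < pm μ (fun ω => (L ω, K ω, S ω)) (l₂, k, s₂) ∧ f s₁ ≠ f s₂
  symm := by
    constructor
    rintro l₁ l₂ ⟨h, k, s₁, s₂, h1, h2, hf⟩
    exact ⟨h.symm, k, s₂, s₁, h2, h1, hf.symm⟩
  loopless := by constructor; rintro l ⟨h, -⟩; exact h rfl

/-- A finite set of vertices is an independent set of the graph `G`. -/
def IsIndepSet {α : Type*} (G : SimpleGraph α) (s : Finset α) : Prop :=
  ∀ a ∈ s, ∀ b ∈ s, ¬ G.Adj a b

end Preliminaries

section Operational

variable {𝒳 𝒴 ℱ : Type*} [Fintype 𝒳] [Fintype 𝒴] [Fintype ℱ]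

/-- Number of messages available at block length `n` and rate `R`: `⌈2^{nR}⌉`. -/
noncomputable def msgCount (n : ℕ) (R : ℝ) : ℕ := ⌈(2 : ℝ) ^ ((n : ℝ) * R)⌉₊

/-- The i.i.d. product distribution of `n` copies of a source with pmf `p`. -/
noncomputable def prodPMF (p : 𝒳 × 𝒴 → ℝ) (n : ℕ) : (Fin n → 𝒳 × 𝒴) → ℝ :=
  fun ω => ∏ j, p (ω j)

/-- The error probability of a code `(φ0, φX, φY, ψ)` for computing `f` on `n`
i.i.d. copies of a source with pmf `p`. -/
noncomputable def errProb (p : 𝒳 × 𝒴 → ℝ) (f : 𝒳 × 𝒴 → ℱ) {n M0 MX MY : ℕ}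
    (φ0 : (Fin n → 𝒳) → Fin M0) (φX : (Fin n → 𝒳) → Fin MX)
    (φY : (Fin n → 𝒴) → Fin M0 → Fin MY)
    (ψ : Fin MX → Fin MY → Fin n → ℱ) : ℝ :=
  ∑ xy : Fin n → 𝒳 × 𝒴,
    if ψ (φX fun i => (xy i).1) (φY (fun i => (xy i).2) (φ0 fun i => (xy i).1))
        = fun i => f (xy i)
    then 0 else prodPMF p n xy

/-- A rate tuple `(R0, RX, RY)` is achievable for computing `f` at the receiver. -/
def Achievable (p : 𝒳 × 𝒴 → ℝ) (f : 𝒳 × 𝒴 → ℱ) (R0 RX RY : ℝ) : Prop :=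
  0 ≤ R0 ∧ 0 ≤ RX ∧ 0 ≤ RY ∧
  ∀ ε > (0 : ℝ), ∃ N : ℕ, ∀ n ≥ N,
    ∃ (φ0 : (Fin n → 𝒳) → Fin (msgCount n R0))
      (φX : (Fin n → 𝒳) → Fin (msgCount n RX))
      (φY : (Fin n → 𝒴) → Fin (msgCount n R0) → Fin (msgCount n RY))
      (ψ : Fin (msgCount n RX) → Fin (msgCount n RY) → Fin n → ℱ),
      errProb p f φ0 φX φY ψ ≤ ε

/-- The rate region: the closure of the set of achievable rate tuples. -/
noncomputable def rateRegion (p : 𝒳 × 𝒴 → ℝ) (f : 𝒳 × 𝒴 → ℱ) : Set (ℝ × ℝ × ℝ) :=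
  closure {r : ℝ × ℝ × ℝ | Achievable p f r.1 r.2.1 r.2.2}

end Operational

section Maj
open Finset

variable {α β : Type*} [DecidableEq β] [Inhabited β]

/-- Majority value of `c` on `s`: the unique value attaining strictly more than
half of `s`, if it exists. -/
noncomputable def majOf (s : Finset α) (c : α → β) : β :=
  if h : ∃ v, s.card < 2 * (s.filter (fun a => c a = v)).card then h.choose else default

lemma majOf_eq {s : Finset α} {c : α → β} {v : β}
    (hv : s.card < 2 * (s.filter (fun a => c a = v)).card) : majOf s c = v := by
  have h : ∃ v, s.card < 2 * (s.filter (fun a => c a = v)).card := ⟨v, hv⟩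
  rw [majOf, dif_pos h]
  by_contra hne
  have hw := h.choose_spec
  set w := h.choose with hwdef
  have hdisj : Disjoint (s.filter (fun a => c a = w)) (s.filter (fun a => c a = v)) := by
    rw [Finset.disjoint_left]
    intro a ha hb
    rw [mem_filter] at ha hb
    exact hne (ha.2 ▸ hb.2.symm ▸ rfl)
  have hsub : (s.filter (fun a => c a = w)) ∪ (s.filter (fun a => c a = v)) ⊆ s :=
    union_subset (filter_subset _ _) (filter_subset _ _)
  have hcard := (Finset.card_union_of_disjoint hdisj) ▸ Finset.card_le_card hsub
  omega

end Maj
section Low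
open Finset

variable {n : ℕ}

/-- The set of "rare" coordinate/value pairs of a set `C` of sequences. -/
def rarePairs (C : Finset (Fin n → Fin 4)) : Finset (Fin n × Fin 4) :=
  Finset.univ.filter (fun ij => 48 * (C.filter (fun x => x ij.1 = ij.2)).card < C.card)

/-- Number of rare-pair hits of a sequence `x`. -/
def rareHits (C : Finset (Fin n → Fin 4)) (x : Fin n → Fin 4) : ℕ :=
  (Finset.univ.filter (fun i : Fin n => (i, x i) ∈ rarePairs C)).card

lemma sum_rareHits (C : Finset (Fin n → Fin 4)) :
    48 * ∑ x ∈ C, rareHits C x ≤ (rarePairs C).card * C.card := by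
  have h1 : ∑ x ∈ C, rareHits C x = ∑ ij ∈ rarePairs C, (C.filter (fun x => x ij.1 = ij.2)).card := by
    have lhs : ∀ x, rareHits C x = ∑ ij ∈ rarePairs C, if x ij.1 = ij.2 then 1 else 0 := by
      intro x
      rw [show (∑ ij ∈ rarePairs C, if x ij.1 = ij.2 then 1 else 0)
          = ((rarePairs C).filter (fun ij => x ij.1 = ij.2)).card from (Finset.card_filter _ _).symm,
        rareHits]
      apply Finset.card_bij (fun i _ => (i, x i))
      · intro i hi
        rw [mem_filter] at hi ⊢
        exact ⟨hi.2, rfl⟩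
      · intro i _ i' _ h
        exact (Prod.mk.injEq _ _ _ _ ▸ h).1
      · intro ij hij
        rw [mem_filter] at hij
        exact ⟨ij.1, by rw [mem_filter]; exact ⟨mem_univ _, by rw [hij.2]; exact hij.1⟩, by
          rw [hij.2]⟩
    simp only [lhs]
    rw [Finset.sum_comm]
    congr 1
    funext ij
    exact (Finset.card_filter _ _).symm
  rw [h1, Finset.mul_sum]
  calc ∑ ij ∈ rarePairs C, 48 * (C.filter (fun x => x ij.1 = ij.2)).card
      ≤ ∑ _ij ∈ rarePairs C, C.card := by
        apply Finset.sum_le_sum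
        intro ij hij
        rw [rarePairs, mem_filter] at hij
        exact le_of_lt hij.2
    _ = (rarePairs C).card * C.card := by rw [Finset.sum_const, smul_eq_mul]

end Low
section Low2
open Finset

variable {n : ℕ}

lemma base_le_one : ((7:ℝ)/8) * (2:ℝ) ^ ((31:ℝ)/168) ≤ 1 := by
  have h0 : (0:ℝ) ≤ (7/8) * (2:ℝ) ^ ((31:ℝ)/168) := by positivity
  rw [← pow_le_one_iff_of_nonneg h0 (n := 168) (by norm_num)]
  have : (((7:ℝ)/8) * (2:ℝ) ^ ((31:ℝ)/168)) ^ (168:ℕ)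
      = ((7:ℝ)/8) ^ (168:ℕ) * (2:ℝ) ^ (31:ℕ) := by
    rw [mul_pow]
    congr 1
    rw [← Real.rpow_natCast ((2:ℝ) ^ ((31:ℝ)/168)) 168, ← Real.rpow_mul (by norm_num)]
    norm_num
  rw [this]
  rw [div_pow, div_mul_eq_mul_div, div_le_one (by positivity)]
  norm_num

lemma rarePairs_card_bound (C : Finset (Fin n → Fin 4)) :
    (C.card : ℝ) * 2 ^ (((rarePairs C).card : ℝ) / 7) ≤ 2 * 4 ^ n := by
  classical
  set m := (rarePairs C).card with hm
  have hcardfun : Fintype.card (Fin n → Fin 4) = 4 ^ n := by simp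
  by_cases hm0 : m = 0
  · rw [hm0]
    norm_num
    calc (C.card : ℝ) ≤ (Fintype.card (Fin n → Fin 4) : ℝ) := by
          exact_mod_cast Finset.card_le_univ C
      _ = 4 ^ n := by rw [hcardfun]; push_cast; ring
      _ ≤ 2 * 4 ^ n := by nlinarith [pow_pos (by norm_num : (0:ℝ) < 4) n]
  -- main case
  set S := C.filter (fun x => 24 * rareHits C x ≤ m) with hS
  -- Step B : C.card ≤ 2 * S.card
  have hB : C.card ≤ 2 * S.card := by
    have hsum := sum_rareHits C
    have hsplit : ∑ x ∈ C, rareHits C x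
        = ∑ x ∈ S, rareHits C x + ∑ x ∈ C.filter (fun x => ¬ (24 * rareHits C x ≤ m)), rareHits C x := by
      rw [hS, Finset.sum_filter_add_sum_filter_not]
    have hlow : ∀ x ∈ C.filter (fun x => ¬ (24 * rareHits C x ≤ m)), m + 1 ≤ 24 * rareHits C x := by
      intro x hx
      rw [mem_filter] at hx
      omega
    have h2 : (C.filter (fun x => ¬ (24 * rareHits C x ≤ m))).card * (m+1)
        ≤ 24 * ∑ x ∈ C.filter (fun x => ¬ (24 * rareHits C x ≤ m)), rareHits C x := by
      rw [Finset.mul_sum]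
      calc _ = ∑ _x ∈ C.filter (fun x => ¬ (24 * rareHits C x ≤ m)), (m+1) := by
            rw [Finset.sum_const, smul_eq_mul]
        _ ≤ _ := Finset.sum_le_sum hlow
    have hcards : S.card + (C.filter (fun x => ¬ (24 * rareHits C x ≤ m))).card = C.card := by
      rw [hS]; exact Finset.card_filter_add_card_filter_not _
    -- 48 * total ≤ m * C.card ; 48 * (sum over complement) ≥ 2 * (m+1) * cardcomp
    set B := (C.filter (fun x => ¬ (24 * rareHits C x ≤ m))).card with hB'
    have h3 : 2 * (B * (m+1)) ≤ 48 * ∑ x ∈ C, rareHits C x := by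
      calc 2 * (B * (m+1)) ≤ 2 * (24 * ∑ x ∈ C.filter (fun x => ¬ (24 * rareHits C x ≤ m)), rareHits C x) :=
            Nat.mul_le_mul_left 2 h2
        _ ≤ 48 * ∑ x ∈ C, rareHits C x := by rw [hsplit]; omega
    have h4 : 2 * (B * (m+1)) ≤ m * C.card := le_trans h3 hsum
    have h5 : 2 * B ≤ C.card := by
      by_contra hcon
      push_neg at hcon
      have hmpos : 0 < m := Nat.pos_of_ne_zero hm0
      have hlt : m * C.card < m * (2 * B) := (Nat.mul_lt_mul_left hmpos).2 hcon
      have he : 2 * (B * (m+1)) = m * (2 * B) + 2 * B := by ring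
      rw [he] at h4
      linarith
    omega
  -- Step C/D : real counting
  set w : Fin n → Fin 4 → ℝ := fun i j => if (i,j) ∈ rarePairs C then (1/2 : ℝ) else 1 with hw
  have hwnn : ∀ i j, 0 ≤ w i j := by
    intro i j; rw [hw]; dsimp; split <;> norm_num
  have hprod : ∀ x : Fin n → Fin 4, ∏ i, w i (x i) = (1/2 : ℝ) ^ (rareHits C x) := by
    intro x
    rw [← Finset.prod_filter_mul_prod_filter_not Finset.univ (fun i => (i, x i) ∈ rarePairs C)]
    have e1 : ∏ i ∈ Finset.univ.filter (fun i => (i, x i) ∈ rarePairs C), w i (x i)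
        = (1/2 : ℝ) ^ (rareHits C x) := by
      rw [rareHits, ← Finset.prod_const]
      apply Finset.prod_congr rfl
      intro i hi
      rw [mem_filter] at hi
      rw [hw]; dsimp; rw [if_pos hi.2]
    have e2 : ∏ i ∈ Finset.univ.filter (fun i => ¬ ((i, x i) ∈ rarePairs C)), w i (x i) = 1 := by
      apply Finset.prod_eq_one
      intro i hi
      rw [mem_filter] at hi
      rw [hw]; dsimp; rw [if_neg hi.2]
    rw [e1, e2, mul_one]
  have hsumprod : ∑ x : Fin n → Fin 4, ∏ i, w i (x i) = ∏ i, ∑ j, w i j := by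
    rw [Finset.prod_univ_sum]
    rw [Fintype.piFinset_univ]
  set mi : Fin n → ℕ := fun i => (Finset.univ.filter (fun j : Fin 4 => (i,j) ∈ rarePairs C)).card with hmi
  have hmisum : ∑ i, mi i = m := by
    rw [hm]
    rw [Finset.card_eq_sum_card_fiberwise (f := Prod.fst) (t := Finset.univ) (fun x _ => mem_univ _)]
    apply Finset.sum_congr rfl
    intro i _
    rw [hmi]
    apply Finset.card_bij (fun j _ => (i, j))
    · intro j hj
      rw [mem_filter] at hj ⊢
      exact ⟨hj.2, rfl⟩
    · intro j _ j' _ h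
      exact (Prod.mk.injEq _ _ _ _ ▸ h).2
    · rintro ⟨i', j⟩ hij
      rw [mem_filter] at hij
      refine ⟨j, ?_, ?_⟩
      · rw [mem_filter]
        refine ⟨mem_univ _, ?_⟩
        rw [← hij.2]
        exact hij.1
      · rw [← hij.2]
    -- done?
  have hsumw : ∀ i, ∑ j, w i j ≤ 4 * ((7:ℝ)/8) ^ (mi i) := by
    intro i
    have hsplit2 : ∑ j, w i j = (mi i : ℝ) * (1/2) + ((4 - mi i : ℕ) : ℝ) := by
      rw [← Finset.sum_filter_add_sum_filter_not Finset.univ (fun j => (i, j) ∈ rarePairs C)]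
      have e1 : ∑ j ∈ Finset.univ.filter (fun j => (i, j) ∈ rarePairs C), w i j
          = (mi i : ℝ) * (1/2) := by
        have hc : ∀ j ∈ Finset.univ.filter (fun j => (i, j) ∈ rarePairs C), w i j = (1/2:ℝ) := by
          intro j hj
          rw [mem_filter] at hj
          rw [hw]; dsimp; rw [if_pos hj.2]
        rw [Finset.sum_congr rfl hc, Finset.sum_const, nsmul_eq_mul, hmi]
      have e2 : ∑ j ∈ Finset.univ.filter (fun j => ¬ ((i, j) ∈ rarePairs C)), w i j
          = ((4 - mi i : ℕ) : ℝ) := by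
        have hc : ∀ j ∈ Finset.univ.filter (fun j => ¬ ((i, j) ∈ rarePairs C)), w i j = (1:ℝ) := by
          intro j hj
          rw [mem_filter] at hj
          rw [hw]; dsimp; rw [if_neg hj.2]
        rw [Finset.sum_congr rfl hc, Finset.sum_const, nsmul_eq_mul, mul_one]
        congr 1
        have := Finset.card_filter_add_card_filter_not (s := (Finset.univ : Finset (Fin 4))) (fun j => (i, j) ∈ rarePairs C)
        rw [hmi]
        simp only [Finset.card_univ, Fintype.card_fin] at this ⊢
        omega
      rw [e1, e2]
    rw [hsplit2]
    have hmile : mi i ≤ 4 := by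
      rw [hmi]
      calc _ ≤ (Finset.univ : Finset (Fin 4)).card := Finset.card_le_card (Finset.filter_subset _ _)
        _ = 4 := by simp
    interval_cases h : mi i <;> norm_num
  -- Step E : assemble
  have hSle : (S.card : ℝ) * (2:ℝ) ^ (-((m:ℝ)/24)) ≤ ∑ x : Fin n → Fin 4, ∏ i, w i (x i) := by
    have per : ∀ x ∈ S, (2:ℝ) ^ (-((m:ℝ)/24)) ≤ ∏ i, w i (x i) := by
      intro x hx
      rw [hS, mem_filter] at hx
      rw [hprod x]
      have e3 : ((1:ℝ)/2) ^ (rareHits C x) = (2:ℝ) ^ (-(rareHits C x : ℝ)) := by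
        rw [Real.rpow_neg (by norm_num), Real.rpow_natCast, one_div, inv_pow]
      rw [e3]
      apply Real.rpow_le_rpow_of_exponent_le (by norm_num)
      have h24 : ((24 * rareHits C x : ℕ) : ℝ) ≤ (m : ℝ) := by exact_mod_cast hx.2
      push_cast at h24
      linarith
    calc (S.card : ℝ) * (2:ℝ) ^ (-((m:ℝ)/24)) = ∑ _x ∈ S, (2:ℝ) ^ (-((m:ℝ)/24)) := by
          rw [Finset.sum_const, nsmul_eq_mul]
      _ ≤ ∑ x ∈ S, ∏ i, w i (x i) := Finset.sum_le_sum per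
      _ ≤ ∑ x : Fin n → Fin 4, ∏ i, w i (x i) :=
          Finset.sum_le_sum_of_subset_of_nonneg (Finset.subset_univ S)
            (fun x _ _ => Finset.prod_nonneg (fun i _ => hwnn i (x i)))
  have hProdBound : ∏ i, ∑ j, w i j ≤ (4:ℝ) ^ n * ((7:ℝ)/8) ^ m := by
    calc ∏ i, ∑ j, w i j ≤ ∏ i, 4 * ((7:ℝ)/8) ^ (mi i) :=
          Finset.prod_le_prod (fun i _ => Finset.sum_nonneg (fun j _ => hwnn i j))
            (fun i _ => hsumw i)
      _ = (4:ℝ) ^ n * ((7:ℝ)/8) ^ m := by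
          rw [Finset.prod_mul_distrib, Finset.prod_const, Finset.prod_pow_eq_pow_sum, hmisum]
          simp
  have hCle : (C.card : ℝ) ≤ 2 * ((2:ℝ) ^ ((m:ℝ)/24) * ((4:ℝ) ^ n * ((7:ℝ)/8) ^ m)) := by
    have hcast : (C.card : ℝ) ≤ 2 * (S.card : ℝ) := by exact_mod_cast hB
    have h2pos : (0:ℝ) < (2:ℝ) ^ (-((m:ℝ)/24)) := Real.rpow_pos_of_pos (by norm_num) _
    have hS2 : (S.card : ℝ) ≤ (2:ℝ) ^ ((m:ℝ)/24) * ((4:ℝ) ^ n * ((7:ℝ)/8) ^ m) := by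
      have := le_trans hSle (le_of_eq hsumprod)
      have := le_trans this hProdBound
      -- S.card * 2^{-m/24} ≤ 4^n (7/8)^m
      have hmul := mul_le_mul_of_nonneg_left this (le_of_lt (Real.rpow_pos_of_pos (by norm_num : (0:ℝ) < 2) ((m:ℝ)/24)))
      calc (S.card : ℝ) = (2:ℝ) ^ ((m:ℝ)/24) * ((S.card : ℝ) * (2:ℝ) ^ (-((m:ℝ)/24))) := by
            rw [show ((m:ℝ)/24) = -(-((m:ℝ)/24)) by ring]
            rw [Real.rpow_neg (by norm_num : (0:ℝ) ≤ 2) (-((m:ℝ)/24))]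
            field_simp
        _ ≤ (2:ℝ) ^ ((m:ℝ)/24) * ((4:ℝ) ^ n * ((7:ℝ)/8) ^ m) := hmul
    linarith
  have hkey : ((7:ℝ)/8) ^ m * ((2:ℝ) ^ ((m:ℝ)/24) * (2:ℝ) ^ ((m:ℝ)/7)) ≤ 1 := by
    rw [← Real.rpow_add (by norm_num : (0:ℝ) < 2),
      show ((m:ℝ)/24 + (m:ℝ)/7) = ((31:ℝ)/168) * (m:ℝ) by ring,
      Real.rpow_mul (by norm_num : (0:ℝ) ≤ 2), Real.rpow_natCast, ← mul_pow]
    calc (((7:ℝ)/8) * (2:ℝ) ^ ((31:ℝ)/168)) ^ m ≤ 1 ^ m := by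
          apply pow_le_pow_left₀ (by positivity) base_le_one
      _ = 1 := one_pow m
  calc (C.card : ℝ) * 2 ^ ((m:ℝ)/7)
      ≤ (2 * ((2:ℝ) ^ ((m:ℝ)/24) * ((4:ℝ) ^ n * ((7:ℝ)/8) ^ m))) * 2 ^ ((m:ℝ)/7) := by
        apply mul_le_mul_of_nonneg_right hCle (le_of_lt (Real.rpow_pos_of_pos (by norm_num) _))
    _ = 2 * (4:ℝ) ^ n * (((7:ℝ)/8) ^ m * ((2:ℝ) ^ ((m:ℝ)/24) * (2:ℝ) ^ ((m:ℝ)/7))) := by ring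
    _ ≤ 2 * (4:ℝ) ^ n * 1 := by
        apply mul_le_mul_of_nonneg_left hkey (by positivity)
    _ = 2 * 4 ^ n := by ring

end Low2
section Conv
open Finset

variable {n b M0 MX MY : ℕ}

/-- The decoder output is correct at `(x, y)`. -/
def goodPt (φ0 : (Fin n → Fin 4) → Fin M0) (φX : (Fin n → Fin 4) → Fin MX)
    (φY : (Fin n → Fin 4 → Fin (2^b)) → Fin M0 → Fin MY)
    (ψ : Fin MX → Fin MY → Fin n → Fin 4 × Fin (2^b))
    (x : Fin n → Fin 4) (y : Fin n → Fin 4 → Fin (2^b)) : Prop :=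
  ψ (φX x) (φY y (φ0 x)) = fun i => (x i, y i (x i))

variable (φ0 : (Fin n → Fin 4) → Fin M0) (φX : (Fin n → Fin 4) → Fin MX)
    (φY : (Fin n → Fin 4 → Fin (2^b)) → Fin M0 → Fin MY)
    (ψ : Fin MX → Fin MY → Fin n → Fin 4 × Fin (2^b))

/-- Number of `x`'s that fail with a given `y`. -/
noncomputable def badY (y : Fin n → Fin 4 → Fin (2^b)) : ℕ :=
  (Finset.univ.filter (fun x : Fin n → Fin 4 => ¬ goodPt φ0 φX φY ψ x y)).card

lemma sum_badY :
    ∑ y : Fin n → Fin 4 → Fin (2^b), badY φ0 φX φY ψ y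
      = (Finset.univ.filter
          (fun p : (Fin n → Fin 4) × (Fin n → Fin 4 → Fin (2^b)) =>
            ¬ goodPt φ0 φX φY ψ p.1 p.2)).card := by
  classical
  rw [Finset.card_eq_sum_card_fiberwise
    (f := Prod.snd) (t := Finset.univ) (fun p _ => mem_univ _)]
  apply Finset.sum_congr rfl
  intro y _
  rw [badY]
  apply Finset.card_bij (fun x _ => (x, y))
  · intro x hx
    rw [mem_filter] at hx ⊢
    exact ⟨by rw [mem_filter]; exact ⟨mem_univ _, hx.2⟩, rfl⟩
  · intro x _ x' _ h
    exact (Prod.mk.injEq _ _ _ _ ▸ h).1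
  · rintro ⟨x, y'⟩ hp
    rw [mem_filter, mem_filter] at hp
    obtain ⟨⟨-, hbad⟩, (hy : y' = y)⟩ := hp
    subst hy
    exact ⟨x, by rw [mem_filter]; exact ⟨mem_univ _, hbad⟩, rfl⟩

lemma conv_A
    (herr : 4000 * (Finset.univ.filter
        (fun p : (Fin n → Fin 4) × (Fin n → Fin 4 → Fin (2^b)) =>
          ¬ goodPt φ0 φX φY ψ p.1 p.2)).card
      ≤ 4 ^ n * (2^b) ^ (4*n)) :
    4 ^ n ≤ 2 * (M0 * MX) := by
  classical
  have hYne : Nonempty (Fin n → Fin 4 → Fin (2^b)) := ⟨fun _ _ => ⟨0, pow_pos (by norm_num) b⟩⟩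
  have hcardY : Fintype.card (Fin n → Fin 4 → Fin (2^b)) = (2^b) ^ (4*n) := by
    have h : ((2^b):ℕ)^(4*n) = ((2^b)^4)^n := pow_mul _ 4 n
    simp [Fintype.card_fun, h]
  obtain ⟨y0, -, hy0⟩ := Finset.exists_min_image (Finset.univ : Finset (Fin n → Fin 4 → Fin (2^b)))
    (badY φ0 φX φY ψ) ⟨Classical.arbitrary _, mem_univ _⟩
  -- cardY * badY y0 ≤ sum badY
  have hmin : Fintype.card (Fin n → Fin 4 → Fin (2^b)) * badY φ0 φX φY ψ y0
      ≤ ∑ y : Fin n → Fin 4 → Fin (2^b), badY φ0 φX φY ψ y := by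
    have := Finset.card_nsmul_le_sum Finset.univ (badY φ0 φX φY ψ) (badY φ0 φX φY ψ y0)
      (fun y _ => hy0 y (mem_univ _))
    simpa [Finset.card_univ] using this
  have h4000 : 4000 * badY φ0 φX φY ψ y0 ≤ 4 ^ n := by
    have hYpos : 0 < Fintype.card (Fin n → Fin 4 → Fin (2^b)) := Fintype.card_pos
    have : (2^b) ^ (4*n) * (4000 * badY φ0 φX φY ψ y0) ≤ (2^b) ^ (4*n) * 4 ^ n := by
      calc (2^b) ^ (4*n) * (4000 * badY φ0 φX φY ψ y0)
          = 4000 * (Fintype.card (Fin n → Fin 4 → Fin (2^b)) * badY φ0 φX φY ψ y0) := by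
            rw [hcardY]; ring
        _ ≤ 4000 * ∑ y : Fin n → Fin 4 → Fin (2^b), badY φ0 φX φY ψ y :=
            Nat.mul_le_mul_left _ hmin
        _ ≤ 4 ^ n * (2^b) ^ (4*n) := by rw [sum_badY]; exact herr
        _ = (2^b) ^ (4*n) * 4 ^ n := by ring
    exact Nat.le_of_mul_le_mul_left this (by positivity)
  set A := Finset.univ.filter (fun x : Fin n → Fin 4 => goodPt φ0 φX φY ψ x y0) with hA
  have hsplit : A.card + badY φ0 φX φY ψ y0 = 4 ^ n := by
    rw [hA, badY]
    rw [Finset.card_filter_add_card_filter_not]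
    simp
  have hinj : A.card ≤ M0 * MX := by
    have := Finset.card_le_card_of_injOn (fun x => (φ0 x, φX x))
      (fun x _ => mem_univ ((φ0 x, φX x)) ) (s := A) (t := Finset.univ) ?_
    · calc A.card ≤ (Finset.univ : Finset (Fin M0 × Fin MX)).card := this
        _ = M0 * MX := by simp
    · intro x hx x' hx' heq
      rw [Finset.mem_coe, hA, mem_filter] at hx hx'
      have h0 : φ0 x = φ0 x' := congrArg Prod.fst heq
      have hXe : φX x = φX x' := congrArg Prod.snd heq
      have hgx := hx.2
      have hgx' := hx'.2
      rw [goodPt] at hgx hgx'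
      rw [h0, hXe] at hgx
      funext i
      have := congrFun (hgx.symm.trans hgx') i
      exact congrArg Prod.fst this
  omega

end Conv
section ConvB
open Finset

variable {n b M0 MX MY : ℕ}
variable (φ0 : (Fin n → Fin 4) → Fin M0) (φX : (Fin n → Fin 4) → Fin MX)
    (φY : (Fin n → Fin 4 → Fin (2^b)) → Fin M0 → Fin MY)
    (ψ : Fin MX → Fin MY → Fin n → Fin 4 × Fin (2^b))

/-- The class of `x`-sequences with cooperation message `m`. -/
def clOf (m : Fin M0) : Finset (Fin n → Fin 4) :=
  Finset.univ.filter (fun x => φ0 x = m)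

/-- The number of bad `x`'s in class `m` for a given `y`. -/
noncomputable def badIn (y : Fin n → Fin 4 → Fin (2^b)) (m : Fin M0) : ℕ :=
  ((clOf φ0 m).filter (fun x => ¬ goodPt φ0 φX φY ψ x y)).card

lemma exists_goodClass (y : Fin n → Fin 4 → Fin (2^b))
    (hy : 1000 * badY φ0 φX φY ψ y ≤ 4 ^ n) :
    ∃ m, 4 ^ n ≤ 2 * M0 * (clOf φ0 m).card
      ∧ 100 * badIn φ0 φX φY ψ y m ≤ (clOf φ0 m).card := by
  classical
  by_contra hcon
  push_neg at hcon
  have hM0pos : 0 < M0 := (φ0 (fun _ => 0)).pos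
  have hT : (4:ℕ) ^ n = ∑ m : Fin M0, (clOf φ0 m).card := by
    have := Finset.card_eq_sum_card_fiberwise
      (f := φ0) (s := (Finset.univ : Finset (Fin n → Fin 4))) (t := Finset.univ)
      (fun x _ => mem_univ _)
    simpa [clOf, Finset.card_univ] using this
  have hbadsum : ∑ m : Fin M0, badIn φ0 φX φY ψ y m = badY φ0 φX φY ψ y := by
    rw [badY]
    rw [Finset.card_eq_sum_card_fiberwise
      (f := φ0) (s := _) (t := Finset.univ) (fun x _ => mem_univ _)]
    apply Finset.sum_congr rfl
    intro m _
    rw [badIn, clOf, Finset.filter_filter, Finset.filter_filter]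
    congr 1
    ext x
    simp only [mem_filter, mem_univ, true_and]
    tauto
  set s₁ := Finset.univ.filter (fun m : Fin M0 => 2 * M0 * (clOf φ0 m).card < 4 ^ n) with hs₁
  set a := ∑ m ∈ s₁, (clOf φ0 m).card with ha
  set c := ∑ m ∈ Finset.univ.filter
    (fun m : Fin M0 => ¬ (2 * M0 * (clOf φ0 m).card < 4 ^ n)), (clOf φ0 m).card with hc
  have hac : a + c = 4 ^ n := by
    rw [ha, hc, Finset.sum_filter_add_sum_filter_not, hT]
  have hcle : 10 * c ≤ 4 ^ n := by
    have hstep : c ≤ 100 * badY φ0 φX φY ψ y := by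
      rw [hc, ← hbadsum]
      calc ∑ m ∈ Finset.univ.filter
            (fun m : Fin M0 => ¬ (2 * M0 * (clOf φ0 m).card < 4 ^ n)), (clOf φ0 m).card
          ≤ ∑ m ∈ Finset.univ.filter
            (fun m : Fin M0 => ¬ (2 * M0 * (clOf φ0 m).card < 4 ^ n)),
              100 * badIn φ0 φX φY ψ y m := by
            apply Finset.sum_le_sum
            intro m hm
            rw [mem_filter] at hm
            have h2 := hcon m (le_of_not_gt hm.2)
            omega
        _ = 100 * ∑ m ∈ Finset.univ.filter
            (fun m : Fin M0 => ¬ (2 * M0 * (clOf φ0 m).card < 4 ^ n)),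
              badIn φ0 φX φY ψ y m := by rw [Finset.mul_sum]
        _ ≤ 100 * ∑ m : Fin M0, badIn φ0 φX φY ψ y m := by
            apply Nat.mul_le_mul_left
            apply Finset.sum_le_sum_of_subset (Finset.filter_subset _ _)
    omega
  have haub : 2 * M0 * a ≤ M0 * 4 ^ n := by
    calc 2 * M0 * a = ∑ m ∈ s₁, 2 * M0 * (clOf φ0 m).card := by
          rw [ha, Finset.mul_sum]
      _ ≤ ∑ _m ∈ s₁, 4 ^ n := Finset.sum_le_sum (fun m hm => by
          rw [hs₁, mem_filter] at hm; exact le_of_lt hm.2)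
      _ = s₁.card * 4 ^ n := by rw [Finset.sum_const, smul_eq_mul]
      _ ≤ M0 * 4 ^ n := by
          apply Nat.mul_le_mul_right
          calc s₁.card ≤ (Finset.univ : Finset (Fin M0)).card :=
                Finset.card_le_card (by rw [hs₁]; exact Finset.filter_subset _ _)
            _ = M0 := by simp
  -- derive contradiction : 9 * 4^n ≤ 10 * a and 2*M0*a ≤ M0*4^n
  have h9 : 9 * 4 ^ n ≤ 10 * a := by omega
  have hTpos : 0 < (4:ℕ) ^ n := by positivity
  nlinarith [Nat.mul_le_mul_left (2 * M0) h9, Nat.mul_le_mul_left 10 haub,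
    Nat.mul_le_mul (le_refl M0) hTpos]

end ConvB
section ConvB2
open Finset

variable {n b M0 MX MY : ℕ}
variable (φ0 : (Fin n → Fin 4) → Fin M0) (φX : (Fin n → Fin 4) → Fin MX)
    (φY : (Fin n → Fin 4 → Fin (2^b)) → Fin M0 → Fin MY)
    (ψ : Fin MX → Fin MY → Fin n → Fin 4 × Fin (2^b))

lemma Y1_large
    (herr : 4000 * (Finset.univ.filter
        (fun p : (Fin n → Fin 4) × (Fin n → Fin 4 → Fin (2^b)) =>
          ¬ goodPt φ0 φX φY ψ p.1 p.2)).card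
      ≤ 4 ^ n * (2^b) ^ (4*n)) :
    3 * (2^b) ^ (4*n)
      ≤ 4 * (Finset.univ.filter
          (fun y : Fin n → Fin 4 → Fin (2^b) => 1000 * badY φ0 φX φY ψ y ≤ 4 ^ n)).card := by
  classical
  have hcardY : Fintype.card (Fin n → Fin 4 → Fin (2^b)) = (2^b) ^ (4*n) := by
    have h : ((2^b):ℕ)^(4*n) = ((2^b)^4)^n := pow_mul _ 4 n
    simp [Fintype.card_fun, h]
  set Y1 := Finset.univ.filter
    (fun y : Fin n → Fin 4 → Fin (2^b) => 1000 * badY φ0 φX φY ψ y ≤ 4 ^ n) with hY1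
  set Y2 := Finset.univ.filter
    (fun y : Fin n → Fin 4 → Fin (2^b) => ¬ (1000 * badY φ0 φX φY ψ y ≤ 4 ^ n)) with hY2
  have hY12 : Y1.card + Y2.card = (2^b) ^ (4*n) := by
    rw [hY1, hY2, Finset.card_filter_add_card_filter_not, Finset.card_univ, hcardY]
  have hY2b : Y2.card * (4 ^ n + 1) ≤ 1000 * ∑ y : Fin n → Fin 4 → Fin (2^b), badY φ0 φX φY ψ y := by
    calc Y2.card * (4 ^ n + 1) = ∑ _y ∈ Y2, (4 ^ n + 1) := by rw [Finset.sum_const, smul_eq_mul]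
      _ ≤ ∑ y ∈ Y2, 1000 * badY φ0 φX φY ψ y := by
          apply Finset.sum_le_sum
          intro y hy
          rw [hY2, mem_filter] at hy
          omega
      _ = 1000 * ∑ y ∈ Y2, badY φ0 φX φY ψ y := by rw [Finset.mul_sum]
      _ ≤ 1000 * ∑ y : Fin n → Fin 4 → Fin (2^b), badY φ0 φX φY ψ y := by
          apply Nat.mul_le_mul_left
          apply Finset.sum_le_sum_of_subset (by rw [hY2]; exact Finset.filter_subset _ _)
  rw [sum_badY] at hY2b
  -- 4 * Y2.card * (4^n+1) ≤ 4000 * badcard ≤ 4^n * cardY ≤ (4^n+1) * cardY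
  have h4Y2 : 4 * Y2.card ≤ (2^b) ^ (4*n) := by
    have hchain : (4 * Y2.card) * (4 ^ n + 1) ≤ (2^b) ^ (4*n) * (4 ^ n + 1) := by
      calc (4 * Y2.card) * (4 ^ n + 1) = 4 * (Y2.card * (4 ^ n + 1)) := by ring
        _ ≤ 4 * (1000 * (Finset.univ.filter
            (fun p : (Fin n → Fin 4) × (Fin n → Fin 4 → Fin (2^b)) =>
              ¬ goodPt φ0 φX φY ψ p.1 p.2)).card) := Nat.mul_le_mul_left _ hY2b
        _ = 4000 * (Finset.univ.filter
            (fun p : (Fin n → Fin 4) × (Fin n → Fin 4 → Fin (2^b)) =>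
              ¬ goodPt φ0 φX φY ψ p.1 p.2)).card := by ring
        _ ≤ 4 ^ n * (2^b) ^ (4*n) := herr
        _ ≤ (2^b) ^ (4*n) * (4 ^ n + 1) := by
            rw [mul_comm]
            exact Nat.mul_le_mul_left _ (Nat.le_succ _)
    exact Nat.le_of_mul_le_mul_right hchain (by positivity)
  omega

lemma rare_le_L (L : ℕ) (hL : ((4 * M0 : ℕ) : ℝ) ≤ (2:ℝ) ^ ((L:ℝ)/7))
    (m : Fin M0) (hm : 4 ^ n ≤ 2 * M0 * (clOf φ0 m).card) :
    (rarePairs (clOf φ0 m)).card ≤ L := by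
  have hbound := rarePairs_card_bound (clOf φ0 m)
  have hclpos : 0 < (clOf φ0 m).card := by
    rcases Nat.eq_zero_or_pos (clOf φ0 m).card with h | h
    · exfalso
      rw [h, Nat.mul_zero] at hm
      have : (0:ℕ) < 4 ^ n := by positivity
      omega
    · exact h
  -- (clOf).card * 2^{r/7} ≤ 2*4^n ≤ 4*M0*(clOf).card
  have h2 : ((clOf φ0 m).card : ℝ) * 2 ^ (((rarePairs (clOf φ0 m)).card : ℝ) / 7)
      ≤ ((clOf φ0 m).card : ℝ) * ((4 * M0 : ℕ) : ℝ) := by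
    calc ((clOf φ0 m).card : ℝ) * 2 ^ (((rarePairs (clOf φ0 m)).card : ℝ) / 7)
        ≤ 2 * 4 ^ n := hbound
      _ ≤ ((clOf φ0 m).card : ℝ) * ((4 * M0 : ℕ) : ℝ) := by
          have : (2:ℝ) * 4 ^ n = ((2 * 4 ^ n : ℕ) : ℝ) := by push_cast; ring
          rw [this, show ((clOf φ0 m).card : ℝ) * ((4 * M0 : ℕ) : ℝ)
            = ((((clOf φ0 m).card) * (4 * M0) : ℕ) : ℝ) by push_cast; ring]
          have harith : 2 * 4 ^ n ≤ (clOf φ0 m).card * (4 * M0) := by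
            calc 2 * 4 ^ n ≤ 2 * (2 * M0 * (clOf φ0 m).card) := by omega
              _ = (clOf φ0 m).card * (4 * M0) := by ring
          exact_mod_cast harith
  have h3 : (2:ℝ) ^ (((rarePairs (clOf φ0 m)).card : ℝ) / 7) ≤ (2:ℝ) ^ ((L:ℝ)/7) := by
    have hcpos : (0:ℝ) < ((clOf φ0 m).card : ℝ) := by exact_mod_cast hclpos
    have := le_of_mul_le_mul_left (by linarith [h2] : ((clOf φ0 m).card : ℝ) * 2 ^ (((rarePairs (clOf φ0 m)).card : ℝ) / 7) ≤ ((clOf φ0 m).card : ℝ) * ((4 * M0 : ℕ) : ℝ)) hcpos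
    exact le_trans this hL
  have := (Real.rpow_le_rpow_left_iff (by norm_num : (1:ℝ) < 2)).1 h3
  have : ((rarePairs (clOf φ0 m)).card : ℝ) ≤ (L : ℝ) := by linarith
  exact_mod_cast this

end ConvB2
section ConvB3
open Finset

variable {n b M0 MX MY : ℕ}
variable (φ0 : (Fin n → Fin 4) → Fin M0) (φX : (Fin n → Fin 4) → Fin MX)
    (φY : (Fin n → Fin 4 → Fin (2^b)) → Fin M0 → Fin MY)
    (ψ : Fin MX → Fin MY → Fin n → Fin 4 × Fin (2^b))

set_option maxHeartbeats 1000000 in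
lemma conv_B (L : ℕ) (hLpos : 0 < L)
    (hL : ((4 * M0 : ℕ) : ℝ) ≤ (2:ℝ) ^ ((L:ℝ)/7))
    (herr : 4000 * (Finset.univ.filter
        (fun p : (Fin n → Fin 4) × (Fin n → Fin 4 → Fin (2^b)) =>
          ¬ goodPt φ0 φX φY ψ p.1 p.2)).card
      ≤ 4 ^ n * (2^b) ^ (4*n)) :
    3 * (2^b) ^ (4*n) ≤ 4 * (M0 * (MY * (2^b) ^ L)) := by
  classical
  have hM0pos : 0 < M0 := (φ0 (fun _ => 0)).pos
  set Y1 := Finset.univ.filter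
    (fun y : Fin n → Fin 4 → Fin (2^b) => 1000 * badY φ0 φX φY ψ y ≤ 4 ^ n) with hY1
  have h1 : 3 * (2^b) ^ (4*n) ≤ 4 * Y1.card := Y1_large φ0 φX φY ψ herr
  suffices hY1card : Y1.card ≤ M0 * (MY * (2^b) ^ L) by
    calc 3 * (2^b) ^ (4*n) ≤ 4 * Y1.card := h1
      _ ≤ 4 * (M0 * (MY * (2^b) ^ L)) := Nat.mul_le_mul_left _ hY1card
  have hsel : ∀ y ∈ Y1, ∃ m, 4 ^ n ≤ 2 * M0 * (clOf φ0 m).card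
      ∧ 100 * badIn φ0 φX φY ψ y m ≤ (clOf φ0 m).card := by
    intro y hy
    rw [hY1, mem_filter] at hy
    exact exists_goodClass φ0 φX φY ψ y hy.2
  set mstar : (Fin n → Fin 4 → Fin (2^b)) → Fin M0 :=
    fun y => if hy : y ∈ Y1 then (hsel y hy).choose else ⟨0, hM0pos⟩ with hmstar
  have hmstar1 : ∀ y ∈ Y1, 4 ^ n ≤ 2 * M0 * (clOf φ0 (mstar y)).card := by
    intro y hy
    rw [hmstar]; dsimp only; rw [dif_pos hy]
    exact (hsel y hy).choose_spec.1
  have hmstar2 : ∀ y ∈ Y1, 100 * badIn φ0 φX φY ψ y (mstar y) ≤ (clOf φ0 (mstar y)).card := by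
    intro y hy
    rw [hmstar]; dsimp only; rw [dif_pos hy]
    exact (hsel y hy).choose_spec.2
  have hrare : ∀ y ∈ Y1, (rarePairs (clOf φ0 (mstar y))).card ≤ L :=
    fun y hy => rare_le_L φ0 L hL (mstar y) (hmstar1 y hy)
  -- the rare-pair-values recording function
  set F : Fin M0 → (Fin n → Fin 4 → Fin (2^b)) → Fin L → Fin (2^b) :=
    fun m z l => if h : (l : ℕ) < (rarePairs (clOf φ0 m)).card
      then z (((rarePairs (clOf φ0 m)).equivFin.symm ⟨(l : ℕ), h⟩ : _).1.1)
             (((rarePairs (clOf φ0 m)).equivFin.symm ⟨(l : ℕ), h⟩ : _).1.2)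
      else ⟨0, pow_pos (by norm_num) b⟩ with hF
  have hrecgen : ∀ (m : Fin M0) (z : Fin n → Fin 4 → Fin (2^b))
      (hcard : (rarePairs (clOf φ0 m)).card ≤ L) (p : Fin n × Fin 4)
      (hp : p ∈ rarePairs (clOf φ0 m)),
      F m z (Fin.castLE hcard ((rarePairs (clOf φ0 m)).equivFin ⟨p, hp⟩)) = z p.1 p.2 := by
    intro m z hcard p hp
    rw [hF]
    dsimp only
    have hlt : ((Fin.castLE hcard ((rarePairs (clOf φ0 m)).equivFin ⟨p, hp⟩) : Fin L) : ℕ)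
        < (rarePairs (clOf φ0 m)).card := by
      simp [Fin.coe_castLE]
    rw [dif_pos hlt]
    have heq : (⟨((Fin.castLE hcard ((rarePairs (clOf φ0 m)).equivFin ⟨p, hp⟩) : Fin L) : ℕ), hlt⟩
        : Fin (rarePairs (clOf φ0 m)).card) = (rarePairs (clOf φ0 m)).equivFin ⟨p, hp⟩ := by
      apply Fin.ext
      simp [Fin.coe_castLE]
    rw [heq, Equiv.symm_apply_apply]
  -- the data map
  set D : (Fin n → Fin 4 → Fin (2^b)) → Fin M0 × Fin MY × (Fin L → Fin (2^b)) :=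
    fun y => (mstar y, φY y (mstar y), F (mstar y) y) with hD
  -- injectivity of the data map on Y1
  have hinjD : Set.InjOn D ↑Y1 := by
    intro y hy y' hy' hDeq
    rw [Finset.mem_coe] at hy hy'
    have hm : mstar y = mstar y' := congrArg Prod.fst hDeq
    have hmY : φY y (mstar y) = φY y' (mstar y') := congrArg (fun z => z.2.1) hDeq
    have hdat : F (mstar y) y = F (mstar y') y' := congrArg (fun z => z.2.2) hDeq
    have hdat' : F (mstar y) y = F (mstar y) y' := by rw [hdat, ← hm]
    funext i j
    by_cases hij : (i, j) ∈ rarePairs (clOf φ0 (mstar y))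
    · have e1 := hrecgen (mstar y) y (hrare y hy) (i, j) hij
      have e2 := hrecgen (mstar y) y' (hrare y hy) (i, j) hij
      rw [← e1, ← e2, hdat']
    · -- majority reconstruction
      set m := mstar y with hmdef
      set mY := φY y (mstar y) with hmYdef
      set colij := (clOf φ0 m).filter (fun x => x i = j) with hcolij
      set cand : (Fin n → Fin 4) → Fin (2^b) := fun x => (ψ (φX x) mY i).2 with hcand
      have key : ∀ z, z ∈ Y1 → mstar z = m → φY z m = mY → majOf colij cand = z i j := by
        intro z hz hmz hmYz
        have hbadz : 100 * badIn φ0 φX φY ψ z m ≤ (clOf φ0 m).card := by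
          have := hmstar2 z hz; rw [hmz] at this; exact this
        have hclpos : 0 < (clOf φ0 m).card := by
          have h4 := hmstar1 z hz
          rw [hmz] at h4
          by_contra hc
          push_neg at hc
          have hc0 : (clOf φ0 m).card = 0 := by omega
          rw [hc0, Nat.mul_zero] at h4
          have : (0:ℕ) < 4 ^ n := by positivity
          omega
        have hnotrare : (clOf φ0 m).card ≤ 48 * colij.card := by
          rw [rarePairs, mem_filter] at hij
          push_neg at hij
          exact hij (mem_univ _)
        have hsub : colij.filter (fun x => goodPt φ0 φX φY ψ x z)
            ⊆ colij.filter (fun x => cand x = z i j) := by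
          intro x hx
          rw [mem_filter] at hx ⊢
          refine ⟨hx.1, ?_⟩
          have hxc := hx.1
          rw [hcolij, mem_filter, clOf, mem_filter] at hxc
          obtain ⟨⟨-, hphi⟩, hxi⟩ := hxc
          have hgood := hx.2
          rw [goodPt] at hgood
          rw [hcand]; dsimp only
          rw [← hmYz, ← hphi, hgood]
          dsimp only
          rw [hxi]
        have hcount : colij.card = (colij.filter (fun x => goodPt φ0 φX φY ψ x z)).card
            + (colij.filter (fun x => ¬ goodPt φ0 φX φY ψ x z)).card :=
          (Finset.card_filter_add_card_filter_not _).symm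
        have hbadfil : (colij.filter (fun x => ¬ goodPt φ0 φX φY ψ x z)).card
            ≤ badIn φ0 φX φY ψ z m := by
          rw [badIn]
          apply Finset.card_le_card
          apply Finset.filter_subset_filter
          rw [hcolij]
          exact Finset.filter_subset _ _
        have hmaj : colij.card < 2 * (colij.filter (fun x => cand x = z i j)).card := by
          have hsc := Finset.card_le_card hsub
          omega
        exact majOf_eq hmaj
      have hy'm : mstar y' = m := hm.symm
      have hy'mY : φY y' m = mY := by rw [← hy'm]; exact hmY.symm
      have e1 := key y hy rfl rfl
      have e2 := key y' hy' hy'm hy'mY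
      rw [← e1, e2]
  -- conclude
  have hcard := Finset.card_le_card_of_injOn D (fun y _ => mem_univ (D y)) hinjD
  calc Y1.card ≤ (Finset.univ : Finset (Fin M0 × Fin MY × (Fin L → Fin (2^b)))).card := hcard
    _ = M0 * (MY * (2^b) ^ L) := by simp [Fintype.card_fun]

end ConvB3
section Bridge
open Finset

variable {n b M0 MX MY : ℕ}

lemma err_to_count
    (φ0 : (Fin n → Fin 4) → Fin M0) (φX : (Fin n → Fin 4) → Fin MX)
    (φY : (Fin n → Fin 4 → Fin (2^b)) → Fin M0 → Fin MY)
    (ψ : Fin MX → Fin MY → Fin n → Fin 4 × Fin (2^b))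
    (herr : errProb (fun _ : Fin 4 × (Fin 4 → Fin (2^b)) => ((4 : ℝ) * ((2 : ℝ) ^ b) ^ (4 : ℕ))⁻¹)
        (fun xy => (xy.1, xy.2 xy.1)) φ0 φX φY ψ ≤ 1/4000) :
    4000 * (Finset.univ.filter
        (fun p : (Fin n → Fin 4) × (Fin n → Fin 4 → Fin (2^b)) =>
          ¬ goodPt φ0 φX φY ψ p.1 p.2)).card
      ≤ 4 ^ n * (2^b) ^ (4*n) := by
  classical
  set K : ℕ := 4 * (2^b)^4 with hK
  have hKpos : 0 < K := by rw [hK]; positivity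
  have hu : ((4 : ℝ) * ((2 : ℝ) ^ b) ^ (4 : ℕ))⁻¹ = ((K:ℕ):ℝ)⁻¹ := by
    rw [hK]; push_cast; ring_nf
  have herr' : errProb (fun _ : Fin 4 × (Fin 4 → Fin (2^b)) => ((4 : ℝ) * ((2 : ℝ) ^ b) ^ (4 : ℕ))⁻¹)
      (fun xy => (xy.1, xy.2 xy.1)) φ0 φX φY ψ
      = ((Finset.univ.filter (fun xy : Fin n → Fin 4 × (Fin 4 → Fin (2^b)) =>
          ¬ goodPt φ0 φX φY ψ (fun i => (xy i).1) (fun i => (xy i).2))).card : ℝ)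
        * (((K:ℕ):ℝ)⁻¹)^n := by
    rw [errProb]
    have hterm : ∀ xy : Fin n → Fin 4 × (Fin 4 → Fin (2^b)),
        (if ψ (φX fun i => (xy i).1) (φY (fun i => (xy i).2) (φ0 fun i => (xy i).1))
            = fun i => ((xy i).1, (xy i).2 (xy i).1)
          then (0:ℝ) else prodPMF (fun _ : Fin 4 × (Fin 4 → Fin (2^b)) =>
            ((4 : ℝ) * ((2 : ℝ) ^ b) ^ (4 : ℕ))⁻¹) n xy)
        = (if ¬ goodPt φ0 φX φY ψ (fun i => (xy i).1) (fun i => (xy i).2)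
            then (((K:ℕ):ℝ)⁻¹)^n else 0) := by
      intro xy
      by_cases h : ψ (φX fun i => (xy i).1) (φY (fun i => (xy i).2) (φ0 fun i => (xy i).1))
          = fun i => ((xy i).1, (xy i).2 (xy i).1)
      · have hg : goodPt φ0 φX φY ψ (fun i => (xy i).1) (fun i => (xy i).2) := h
        rw [if_pos h, if_neg (not_not_intro hg)]
      · have hg : ¬ goodPt φ0 φX φY ψ (fun i => (xy i).1) (fun i => (xy i).2) := h
        rw [if_neg h, if_pos hg]
        rw [prodPMF]
        rw [Finset.prod_congr rfl (fun j _ => hu), Finset.prod_const]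
        simp
    refine Eq.trans (Finset.sum_congr rfl (fun xy _ => by convert hterm xy using 2)) ?_
    rw [← Finset.sum_filter, Finset.sum_const, nsmul_eq_mul]
  -- card of bad Ω equals card of bad pairs
  have hbij : (Finset.univ.filter (fun xy : Fin n → Fin 4 × (Fin 4 → Fin (2^b)) =>
          ¬ goodPt φ0 φX φY ψ (fun i => (xy i).1) (fun i => (xy i).2))).card
      = (Finset.univ.filter
        (fun p : (Fin n → Fin 4) × (Fin n → Fin 4 → Fin (2^b)) =>
          ¬ goodPt φ0 φX φY ψ p.1 p.2)).card := by
    apply Finset.card_bij (fun xy _ => ((fun i => (xy i).1), (fun i => (xy i).2)))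
    · intro xy hxy
      rw [mem_filter] at hxy ⊢
      exact ⟨mem_univ _, hxy.2⟩
    · intro xy _ xy' _ h
      have h1 := congrArg Prod.fst h
      have h2 := congrArg Prod.snd h
      dsimp only at h1 h2
      funext i
      exact Prod.ext (congrFun h1 i) (congrFun h2 i)
    · rintro ⟨x, y⟩ hp
      rw [mem_filter] at hp
      refine ⟨fun i => (x i, y i), ?_, rfl⟩
      rw [mem_filter]
      exact ⟨mem_univ _, hp.2⟩
  rw [herr', hbij] at herr
  -- now conclude by clearing the inverse
  set B := (Finset.univ.filter
    (fun p : (Fin n → Fin 4) × (Fin n → Fin 4 → Fin (2^b)) =>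
      ¬ goodPt φ0 φX φY ψ p.1 p.2)).card
  have hKn : ((K:ℕ):ℝ)^n = ((K^n : ℕ):ℝ) := by push_cast; ring
  have hKnpos : (0:ℝ) < ((K^n : ℕ):ℝ) := by positivity
  have hBle : (B : ℝ) * 4000 ≤ ((K^n : ℕ):ℝ) := by
    have := mul_le_mul_of_nonneg_right herr (le_of_lt hKnpos)
    rw [inv_pow, hKn] at this
    calc (B : ℝ) * 4000 = ((B:ℝ) * (((K^n : ℕ):ℝ))⁻¹ * ((K^n : ℕ):ℝ)) * 4000 := by
          field_simp
      _ ≤ (1/4000 * ((K^n : ℕ):ℝ)) * 4000 := by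
          apply mul_le_mul_of_nonneg_right this (by norm_num)
      _ = ((K^n : ℕ):ℝ) := by ring
  have hfin : 4000 * B ≤ K ^ n := by
    have hcast : ((4000 * B : ℕ):ℝ) ≤ ((K^n : ℕ):ℝ) := by push_cast; push_cast at hBle; linarith
    exact_mod_cast hcast
  calc 4000 * B ≤ K ^ n := hfin
    _ = 4 ^ n * (2^b) ^ (4*n) := by
        rw [hK, mul_pow, ← pow_mul]

end Bridge
section OneBitAux

lemma msgCount_nat (n k : ℕ) : msgCount n (k : ℝ) = 2 ^ (n * k) := by
  unfold msgCount
  rw [show ((n : ℝ) * (k : ℝ)) = ((n * k : ℕ) : ℝ) by push_cast; ring,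
    Real.rpow_natCast,
    show ((2 : ℝ) ^ (n * k : ℕ)) = (((2 ^ (n * k) : ℕ)) : ℝ) by push_cast; ring]
  exact Nat.ceil_natCast _

def obBit (v : Fin 4) : Fin 2 := ⟨v.val / 2, by omega⟩

def obIdx (t : Fin 2) (s : Fin 2) : Fin 4 := ⟨2 * t.val + s.val, by omega⟩

lemma obKey (v : Fin 4) :
    (if v.val % 2 = 0 then obIdx (obBit v) 0 else obIdx (obBit v) 1) = v := by
  by_cases h : v.val % 2 = 0 <;> simp only [h, if_true, if_false] <;>
    apply Fin.ext <;> simp [obIdx, obBit] <;> omega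

lemma ob_achievable (b : ℕ) :
    Achievable (fun _ : Fin 4 × (Fin 4 → Fin (2 ^ b)) => ((4 : ℝ) * ((2 : ℝ) ^ b) ^ (4 : ℕ))⁻¹)
      (fun xy => (xy.1, xy.2 xy.1)) 1 2 (2 * (b : ℝ)) := by
  refine ⟨by norm_num, by norm_num, by positivity, ?_⟩
  intro ε hε
  refine ⟨0, fun n _ => ?_⟩
  set Q := 2 ^ b with hQdef
  have h0 : msgCount n 1 = 2 ^ n := by
    have := msgCount_nat n 1; simpa using this
  have hX : msgCount n 2 = 4 ^ n := by
    have := msgCount_nat n 2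
    rw [show ((2:ℕ):ℝ) = (2:ℝ) by norm_num] at this
    rw [this, mul_comm, pow_mul]; norm_num
  have hY : msgCount n (2 * (b : ℝ)) = (Q * Q) ^ n := by
    have := msgCount_nat n (2 * b)
    rw [show (((2 * b : ℕ)):ℝ) = 2 * (b:ℝ) by push_cast; ring] at this
    rw [this, mul_comm n (2*b), pow_mul, two_mul, pow_add]
  let e0 : (Fin n → Fin 2) ≃ Fin (msgCount n 1) :=
    finFunctionFinEquiv.trans (finCongr h0.symm)
  let eX : (Fin n → Fin 4) ≃ Fin (msgCount n 2) :=
    finFunctionFinEquiv.trans (finCongr hX.symm)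
  let eY : (Fin n → Fin (Q * Q)) ≃ Fin (msgCount n (2 * (b : ℝ))) :=
    finFunctionFinEquiv.trans (finCongr hY.symm)
  let pairE : (Fin Q × Fin Q) ≃ Fin (Q * Q) := finProdFinEquiv
  refine ⟨fun x => e0 (fun i => obBit (x i)),
    fun x => eX x,
    fun y m0 => eY (fun i => pairE (y i (obIdx (e0.symm m0 i) 0), y i (obIdx (e0.symm m0 i) 1))),
    fun mX mY i =>
      (eX.symm mX i,
        if (eX.symm mX i).val % 2 = 0 then (pairE.symm (eY.symm mY i)).1
        else (pairE.symm (eY.symm mY i)).2), ?_⟩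
  refine le_trans (le_of_eq ?_) hε.le
  unfold errProb
  apply Finset.sum_eq_zero
  intro xy _
  rw [if_pos]
  funext i
  simp only [Equiv.symm_apply_apply]
  refine Prod.ext rfl ?_
  show (if ((xy i).1).val % 2 = 0
      then (xy i).2 (obIdx (obBit ((xy i).1)) 0)
      else (xy i).2 (obIdx (obBit ((xy i).1)) 1)) = (xy i).2 (xy i).1
  rw [← apply_ite ((xy i).2), obKey]

end OneBitAux
section Rate
open Finset

lemma two_rpow_three : (2:ℝ) ^ ((3:ℝ)) = 8 := by
  rw [show (3:ℝ) = ((3:ℕ):ℝ) by norm_num, Real.rpow_natCast]; norm_num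

lemma ach_sum_rate (b : ℕ) (R0 RX RY : ℝ)
    (hach : Achievable (fun _ : Fin 4 × (Fin 4 → Fin (2 ^ b)) =>
        ((4 : ℝ) * ((2 : ℝ) ^ b) ^ (4 : ℕ))⁻¹)
      (fun xy => (xy.1, xy.2 xy.1)) R0 RX RY)
    (c : ℝ) (hc : 0 < c) :
    2 + 4 * (b:ℝ) ≤ RX + RY + (2 + 7 * (b:ℝ)) * R0 + c := by
  classical
  obtain ⟨hR0, hRX, hRY, hach⟩ := hach
  obtain ⟨N, hN⟩ := hach (1/4000) (by norm_num)
  set n := max N (⌈(7 + 28 * (b:ℝ))/c⌉₊ + 1) with hn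
  have hnN : N ≤ n := le_max_left _ _
  have hn1 : 1 ≤ n := le_trans (Nat.succ_le_succ (Nat.zero_le _)) (le_max_right _ _)
  have hnpos : (0:ℝ) < (n:ℝ) := by exact_mod_cast hn1
  have hnc : 7 + 28 * (b:ℝ) ≤ c * (n:ℝ) := by
    have h1 : (7 + 28 * (b:ℝ))/c < ((⌈(7 + 28 * (b:ℝ))/c⌉₊ + 1 : ℕ) : ℝ) := by
      push_cast
      exact lt_of_le_of_lt (Nat.le_ceil _) (by linarith)
    have h2 : ((⌈(7 + 28 * (b:ℝ))/c⌉₊ + 1 : ℕ) : ℝ) ≤ (n:ℝ) := by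
      have hh : (⌈(7 + 28 * (b:ℝ))/c⌉₊ + 1 : ℕ) ≤ n := le_max_right _ _
      exact_mod_cast hh
    have h3 : (7 + 28 * (b:ℝ))/c < (n:ℝ) := lt_of_lt_of_le h1 h2
    calc 7 + 28 * (b:ℝ) = ((7 + 28 * (b:ℝ))/c) * c := by field_simp
      _ ≤ (n:ℝ) * c := mul_le_mul_of_nonneg_right (le_of_lt h3) (le_of_lt hc)
      _ = c * (n:ℝ) := by ring
  set M0 := msgCount n R0 with hM0
  set MX := msgCount n RX with hMX
  set MY := msgCount n RY with hMY
  obtain ⟨φ0, φX, φY, ψ, herr⟩ := hN n hnN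
  have hcount := err_to_count φ0 φX φY ψ herr
  -- message count bound
  have hmsgle : ∀ R : ℝ, 0 ≤ R → ((msgCount n R : ℕ) : ℝ) ≤ 2 * (2:ℝ) ^ ((n:ℝ) * R) := by
    intro R hR
    have hpos : (0:ℝ) < (2:ℝ) ^ ((n:ℝ) * R) := Real.rpow_pos_of_pos (by norm_num) _
    have h1 : ((msgCount n R : ℕ):ℝ) < (2:ℝ) ^ ((n:ℝ) * R) + 1 := by
      rw [msgCount]
      exact Nat.ceil_lt_add_one (le_of_lt hpos)
    have h2 : (1:ℝ) ≤ (2:ℝ) ^ ((n:ℝ) * R) := by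
      rw [show (1:ℝ) = (2:ℝ) ^ (0:ℝ) from (Real.rpow_zero 2).symm]
      exact Real.rpow_le_rpow_of_exponent_le (by norm_num) (by positivity)
    linarith
  have hmsgpos : ∀ R : ℝ, (0:ℝ) < ((msgCount n R : ℕ) : ℝ) := by
    intro R
    have : 0 < msgCount n R := by
      rw [msgCount]
      have hpos : (0:ℝ) < (2:ℝ) ^ ((n:ℝ) * R) := Real.rpow_pos_of_pos (by norm_num) _
      exact Nat.ceil_pos.2 hpos
    exact_mod_cast this
  -- exponent L
  set L := 7 * (⌈(n:ℝ) * R0⌉₊ + 3) with hLdef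
  have hLpos : 0 < L := by omega
  have hLbound : (L : ℝ) ≤ 7 * ((n:ℝ) * R0) + 28 := by
    have h1 : (⌈(n:ℝ) * R0⌉₊ : ℝ) < (n:ℝ) * R0 + 1 := Nat.ceil_lt_add_one (by positivity)
    rw [hLdef]
    push_cast
    linarith
  have hL7 : ((4 * M0 : ℕ) : ℝ) ≤ (2:ℝ) ^ ((L:ℝ)/7) := by
    have h1 : ((4 * M0 : ℕ) : ℝ) ≤ 8 * (2:ℝ) ^ ((n:ℝ) * R0) := by
      push_cast
      have := hmsgle R0 hR0
      rw [← hM0] at this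
      linarith
    have h2 : (8:ℝ) * (2:ℝ) ^ ((n:ℝ) * R0) = (2:ℝ) ^ (3 + (n:ℝ) * R0) := by
      rw [Real.rpow_add (by norm_num), two_rpow_three]
    have h3 : (3 + (n:ℝ) * R0) ≤ (L:ℝ)/7 := by
      rw [hLdef]
      push_cast
      have := Nat.le_ceil ((n:ℝ) * R0)
      linarith
    calc ((4 * M0 : ℕ) : ℝ) ≤ (2:ℝ) ^ (3 + (n:ℝ) * R0) := by rw [← h2]; exact h1
      _ ≤ (2:ℝ) ^ ((L:ℝ)/7) := Real.rpow_le_rpow_of_exponent_le (by norm_num) h3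
  have hA := conv_A φ0 φX φY ψ hcount
  have hB := conv_B φ0 φX φY ψ L hLpos hL7 hcount
  -- inequality 1 : 2n ≤ 3 + nR0 + nRX
  have e1 : 2 * (n:ℝ) ≤ 3 + (n:ℝ) * R0 + (n:ℝ) * RX := by
    have hcast : ((4:ℝ)) ^ n ≤ 2 * ((M0:ℝ) * (MX:ℝ)) := by
      exact_mod_cast hA
    have hla : ((4:ℝ)) ^ n = (2:ℝ) ^ ((2 * (n:ℕ) : ℕ) : ℝ) := by
      rw [Real.rpow_natCast, pow_mul]
      norm_num
    have hrhs : 2 * ((M0:ℝ) * (MX:ℝ)) ≤ (2:ℝ) ^ (3 + ((n:ℝ) * R0 + (n:ℝ) * RX)) := by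
      have hM0' := hmsgle R0 hR0; rw [← hM0] at hM0'
      have hMX' := hmsgle RX hRX; rw [← hMX] at hMX'
      have hM0pos := hmsgpos R0; rw [← hM0] at hM0pos
      have hMXpos := hmsgpos RX; rw [← hMX] at hMXpos
      have hp1 : (0:ℝ) < (2:ℝ) ^ ((n:ℝ) * R0) := Real.rpow_pos_of_pos (by norm_num) _
      have hp2 : (0:ℝ) < (2:ℝ) ^ ((n:ℝ) * RX) := Real.rpow_pos_of_pos (by norm_num) _
      calc 2 * ((M0:ℝ) * (MX:ℝ))
          ≤ 2 * ((2 * (2:ℝ) ^ ((n:ℝ) * R0)) * (2 * (2:ℝ) ^ ((n:ℝ) * RX))) := by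
            apply mul_le_mul_of_nonneg_left _ (by norm_num)
            apply mul_le_mul hM0' hMX' (le_of_lt hMXpos) (by positivity)
        _ = 8 * ((2:ℝ) ^ ((n:ℝ) * R0) * (2:ℝ) ^ ((n:ℝ) * RX)) := by ring
        _ = (2:ℝ) ^ (3 + ((n:ℝ) * R0 + (n:ℝ) * RX)) := by
            rw [Real.rpow_add (by norm_num), two_rpow_three, Real.rpow_add (by norm_num)]
    have := le_trans (le_of_eq hla.symm) (le_trans hcast hrhs)
    have hexp := (Real.rpow_le_rpow_left_iff (by norm_num : (1:ℝ) < 2)).1 this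
    push_cast at hexp
    linarith
  -- inequality 2 : 4bn ≤ 4 + nR0 + nRY + bL
  have e2 : 4 * (b:ℝ) * (n:ℝ) ≤ 4 + (n:ℝ) * R0 + (n:ℝ) * RY + (b:ℝ) * (L:ℝ) := by
    have hcast : (((2:ℕ)^b : ℕ):ℝ) ^ (4*n) ≤ 4 * ((M0:ℝ) * ((MY:ℝ) * (((2:ℕ)^b : ℕ):ℝ) ^ L)) := by
      have h3cast : 3 * (((2:ℕ)^b:ℕ):ℝ) ^ (4*n) ≤ 4 * ((M0:ℝ) * ((MY:ℝ) * (((2:ℕ)^b:ℕ):ℝ) ^ L)) := by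
        exact_mod_cast hB
      have : (0:ℝ) ≤ (((2:ℕ)^b:ℕ):ℝ) ^ (4*n) := by positivity
      linarith
    have hla : (((2:ℕ)^b : ℕ):ℝ) ^ (4*n) = (2:ℝ) ^ ((b * (4*n) : ℕ) : ℝ) := by
      rw [Real.rpow_natCast]
      push_cast
      ring
    have hlb : (((2:ℕ)^b : ℕ):ℝ) ^ L = (2:ℝ) ^ ((b * L : ℕ) : ℝ) := by
      rw [Real.rpow_natCast]
      push_cast
      ring
    have hrhs : 4 * ((M0:ℝ) * ((MY:ℝ) * (2:ℝ) ^ ((b * L : ℕ) : ℝ)))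
        ≤ (2:ℝ) ^ (4 + ((n:ℝ) * R0 + (n:ℝ) * RY + ((b * L : ℕ) : ℝ))) := by
      have hM0' := hmsgle R0 hR0; rw [← hM0] at hM0'
      have hMY' := hmsgle RY hRY; rw [← hMY] at hMY'
      have hMYpos := hmsgpos RY; rw [← hMY] at hMYpos
      have hbl : (0:ℝ) < (2:ℝ) ^ ((b * L : ℕ) : ℝ) := Real.rpow_pos_of_pos (by norm_num) _
      calc 4 * ((M0:ℝ) * ((MY:ℝ) * (2:ℝ) ^ ((b * L : ℕ) : ℝ)))
          ≤ 4 * ((2 * (2:ℝ) ^ ((n:ℝ) * R0)) * ((2 * (2:ℝ) ^ ((n:ℝ) * RY)) * (2:ℝ) ^ ((b * L : ℕ) : ℝ))) := by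
            apply mul_le_mul_of_nonneg_left _ (by norm_num)
            apply mul_le_mul hM0' _ (by positivity) (by positivity)
            exact mul_le_mul_of_nonneg_right hMY' (le_of_lt hbl)
        _ = 16 * ((2:ℝ) ^ ((n:ℝ) * R0) * ((2:ℝ) ^ ((n:ℝ) * RY) * (2:ℝ) ^ ((b * L : ℕ) : ℝ))) := by
            ring
        _ = (2:ℝ) ^ (4 + ((n:ℝ) * R0 + (n:ℝ) * RY + ((b * L : ℕ) : ℝ))) := by
            rw [Real.rpow_add (by norm_num : (0:ℝ) < 2),
              Real.rpow_add (by norm_num : (0:ℝ) < 2),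
              Real.rpow_add (by norm_num : (0:ℝ) < 2),
              show (2:ℝ) ^ (4:ℝ) = 16 by
                rw [show (4:ℝ) = ((4:ℕ):ℝ) by norm_num, Real.rpow_natCast]; norm_num]
            ring
    have hchain : (2:ℝ) ^ ((b * (4*n) : ℕ) : ℝ)
        ≤ (2:ℝ) ^ (4 + ((n:ℝ) * R0 + (n:ℝ) * RY + ((b * L : ℕ) : ℝ))) := by
      rw [← hla]
      refine le_trans hcast ?_
      rw [show 4 * ((M0:ℝ) * ((MY:ℝ) * (((2:ℕ)^b : ℕ):ℝ) ^ L))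
        = 4 * ((M0:ℝ) * ((MY:ℝ) * (2:ℝ) ^ ((b * L : ℕ) : ℝ))) by rw [hlb]]
      exact hrhs
    have hexp := (Real.rpow_le_rpow_left_iff (by norm_num : (1:ℝ) < 2)).1 hchain
    push_cast at hexp
    linarith
  -- combine and divide by n
  have hbL : (b:ℝ) * (L:ℝ) ≤ 7 * (b:ℝ) * ((n:ℝ) * R0) + 28 * (b:ℝ) := by
    have hb0 : (0:ℝ) ≤ (b:ℝ) := by positivity
    nlinarith [hLbound]
  have hmain : (2 + 4 * (b:ℝ)) * (n:ℝ)
      ≤ (RX + RY + (2 + 7 * (b:ℝ)) * R0 + c) * (n:ℝ) := by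
    have : (2 + 4 * (b:ℝ)) * (n:ℝ)
        ≤ (RX + RY + (2 + 7 * (b:ℝ)) * R0) * (n:ℝ) + (7 + 28 * (b:ℝ)) := by
      nlinarith [e1, e2, hbL]
    nlinarith [hnc]
  exact le_of_mul_le_mul_right hmain hnpos

end Rate
/-- **Example 1 (one bit of cooperation can help arbitrarily).** Let `X` be uniform on
`{1,…,4}`, `Y = (Y_1,…,Y_4)` with the `Y_j` i.i.d. uniform on `{1,…,2^b}` and
independent of `X`, and `f(x,y) = (x, y_x)`. Then (i) the rate tuple `(1, 2, 2b)` is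
in the rate region, and (ii) every tuple `(0, RX, RY)` in the rate region satisfies
`RX + RY ≥ 2 + 4b`. -/
theorem one_bit_cooperation_helps (b : ℕ) (hb : 1 ≤ b) :
    (((1 : ℝ), (2 : ℝ), (2 * (b : ℝ))) ∈
      rateRegion (fun _ : Fin 4 × (Fin 4 → Fin (2 ^ b)) => ((4 : ℝ) * ((2 : ℝ) ^ b) ^ (4 : ℕ))⁻¹)
        (fun xy => (xy.1, xy.2 xy.1))) ∧
    (∀ RX RY : ℝ,
      ((0 : ℝ), RX, RY) ∈
        rateRegion (fun _ : Fin 4 × (Fin 4 → Fin (2 ^ b)) => ((4 : ℝ) * ((2 : ℝ) ^ b) ^ (4 : ℕ))⁻¹)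
          (fun xy => (xy.1, xy.2 xy.1)) →
      2 + 4 * (b : ℝ) ≤ RX + RY) := by
  constructor
  · exact subset_closure (ob_achievable b)
  · intro RX RY hmem
    rw [rateRegion] at hmem
    by_contra hlt
    push_neg at hlt
    set δ := 2 + 4 * (b:ℝ) - (RX + RY) with hδ
    have hδpos : 0 < δ := by rw [hδ]; linarith
    have hbpos : (0:ℝ) ≤ (b:ℝ) := Nat.cast_nonneg b
    set η := δ / (2 * (4 + 7 * (b:ℝ))) with hη
    have hηpos : 0 < η := by
      rw [hη]
      apply div_pos hδpos
      linarith
    obtain ⟨r, hr, hdist⟩ := Metric.mem_closure_iff.1 hmem η hηpos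
    have hach : Achievable (fun _ : Fin 4 × (Fin 4 → Fin (2 ^ b)) =>
        ((4 : ℝ) * ((2 : ℝ) ^ b) ^ (4 : ℕ))⁻¹)
        (fun xy => (xy.1, xy.2 xy.1)) r.1 r.2.1 r.2.2 := hr
    have h1 : dist (0:ℝ) r.1 < η := by
      rw [Prod.dist_eq] at hdist
      exact lt_of_le_of_lt (le_max_left _ _) hdist
    have h2 : dist ((RX, RY) : ℝ × ℝ) r.2 < η := by
      rw [Prod.dist_eq] at hdist
      exact lt_of_le_of_lt (le_max_right _ _) hdist
    have h3 : dist RX r.2.1 < η := by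
      rw [Prod.dist_eq] at h2
      exact lt_of_le_of_lt (le_max_left _ _) h2
    have h4 : dist RY r.2.2 < η := by
      rw [Prod.dist_eq] at h2
      exact lt_of_le_of_lt (le_max_right _ _) h2
    rw [Real.dist_eq] at h1 h3 h4
    have hr1 : r.1 < η := by
      have := abs_lt.1 h1
      linarith [this.1, this.2]
    have hr3 : r.2.1 < RX + η := by
      have := abs_lt.1 h3
      linarith [this.1, this.2]
    have hr4 : r.2.2 < RY + η := by
      have := abs_lt.1 h4
      linarith [this.1, this.2]
    have hrate := ach_sum_rate b r.1 r.2.1 r.2.2 hach (δ/2) (by linarith)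
    have hprod : (2 + 7 * (b:ℝ)) * r.1 ≤ (2 + 7 * (b:ℝ)) * η :=
      mul_le_mul_of_nonneg_left (le_of_lt hr1) (by linarith)
    have hAB : (4 + 7 * (b:ℝ)) * η = (2 + 7 * (b:ℝ)) * η + 2 * η := by ring
    have hsum : (4 + 7 * (b:ℝ)) * η = δ / 2 := by
      rw [hη]
      field_simp
    linarith
end

section
/- Conditional independence of the past encoder output (step in the converse of Theorem 2). Let ((X_j,Y_j))_{j=1}^n be i.i.d. copies of a pair (X,Y) of finite-valued random variables. Let φ_0 and φ_X be arbitrary functions on 𝒳^n and φ_Y an arbitrary function on 𝒞_0 × 𝒴^n, and set C_0 = φ_0(X_1,…,X_n), C_X = φ_X(X_1,…,X_n), C_Y = φ_Y(C_0, Y_1,…,Y_n). Then for every i ∈ {1,…,n} and every function f : 𝒳×𝒴 → ℱ, the random variables f(X_i,Y_i) and C_X are conditionally independent given (C_0, X_i, X_{i+1},…,X_n, Y_1,…,Y_{i−1}, C_Y). -/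
open scoped BigOperators Classical

section Swap

variable {𝒳 𝒴 : Type*} {n : ℕ}

/-- Swap the coordinates below `i` between the two components of a pair of sequences. -/
def swapLow (i : Fin n) (q : (Fin n → 𝒳 × 𝒴) × (Fin n → 𝒳 × 𝒴)) :
    (Fin n → 𝒳 × 𝒴) × (Fin n → 𝒳 × 𝒴) :=
  (fun j => if j < i then q.2 j else q.1 j, fun j => if j < i then q.1 j else q.2 j)

lemma swapLow_invol (i : Fin n) :
    Function.Involutive (swapLow (𝒳 := 𝒳) (𝒴 := 𝒴) i) := by
  rintro ⟨q1, q2⟩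
  simp only [swapLow, Prod.mk.injEq]
  constructor <;> funext j <;> by_cases h : j < i <;> simp [h]

lemma swapLow_comps (i : Fin n) (ω₁ ω₂ : Fin n → 𝒳 × 𝒴)
    (hx : ∀ j, i ≤ j → (ω₁ j).1 = (ω₂ j).1)
    (hy : ∀ j, j < i → (ω₁ j).2 = (ω₂ j).2) :
    (fun j => ((swapLow i (ω₁, ω₂)).1 j).1) = (fun j => (ω₂ j).1)
    ∧ (fun j => ((swapLow i (ω₁, ω₂)).1 j).2) = (fun j => (ω₁ j).2)
    ∧ (fun j => ((swapLow i (ω₁, ω₂)).2 j).1) = (fun j => (ω₁ j).1)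
    ∧ (fun j => ((swapLow i (ω₁, ω₂)).2 j).2) = (fun j => (ω₂ j).2) := by
  refine ⟨funext fun j => ?_, funext fun j => ?_, funext fun j => ?_, funext fun j => ?_⟩ <;>
  · by_cases h : j < i
    · simp only [swapLow, if_pos h]
      try first | exact hy j h | exact (hy j h).symm
    · simp only [swapLow, if_neg h]
      try first | exact hx j (le_of_not_gt h) | exact (hx j (le_of_not_gt h)).symm

lemma swapLow_fst_apply_self (i : Fin n) (q : (Fin n → 𝒳 × 𝒴) × (Fin n → 𝒳 × 𝒴)) :
    (swapLow i q).1 i = q.1 i := by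
  simp [swapLow]

lemma swapLow_prodPMF [Fintype 𝒳] [Fintype 𝒴] (p : 𝒳 × 𝒴 → ℝ) (i : Fin n)
    (q : (Fin n → 𝒳 × 𝒴) × (Fin n → 𝒳 × 𝒴)) :
    prodPMF p n (swapLow i q).1 * prodPMF p n (swapLow i q).2
      = prodPMF p n q.1 * prodPMF p n q.2 := by
  unfold prodPMF
  rw [← Finset.prod_mul_distrib, ← Finset.prod_mul_distrib]
  exact Finset.prod_congr rfl fun j _ => by
    by_cases h : j < i <;> simp [swapLow, h, mul_comm]

end Swap

/-- **Step in the converse of Theorem 2.** With `C_0 = φ_0(X^n)`, `C_X = φ_X(X^n)` and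
`C_Y = φ_Y(C_0, Y^n)` computed from `n` i.i.d. copies of `(X,Y)`, the random variables
`f(X_i,Y_i)` and `C_X` are conditionally independent given
`(C_0, X_i, X_{i+1}, …, X_n, Y_1, …, Y_{i−1}, C_Y)`. -/
theorem past_encoder_output_cond_indep
    {𝒳 𝒴 ℱ 𝒞0 𝒞X 𝒞Y : Type*}
    [Fintype 𝒳] [Fintype 𝒴] [Fintype ℱ] [Fintype 𝒞0] [Fintype 𝒞X] [Fintype 𝒞Y]
    (p : 𝒳 × 𝒴 → ℝ) (hp : IsPMF p) (n : ℕ)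
    (φ0 : (Fin n → 𝒳) → 𝒞0) (φX : (Fin n → 𝒳) → 𝒞X)
    (φY : 𝒞0 × (Fin n → 𝒴) → 𝒞Y)
    (f : 𝒳 × 𝒴 → ℱ) (i : Fin n) :
    CondIndepRV (prodPMF p n)
      (fun ω => f (ω i))
      (fun ω => (φ0 fun j => (ω j).1,
        fun j : {j : Fin n // i ≤ j} => (ω j.1).1,
        fun j : {j : Fin n // j < i} => (ω j.1).2,
        φY (φ0 fun j => (ω j).1, fun j => (ω j).2)))
      (fun ω => φX fun j => (ω j).1) := by
  
  classical
  rintro a ⟨c0, xg, yl, cY⟩ c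
  simp only [pm, Prod.mk.injEq]
  rw [Finset.sum_mul_sum, Finset.sum_mul_sum,
    ← Fintype.sum_prod_type', ← Fintype.sum_prod_type']
  refine Fintype.sum_bijective (swapLow i) ((swapLow_invol i).bijective) _ _ ?_
  rintro ⟨ω₁, ω₂⟩
  rw [ite_zero_mul_ite_zero, ite_zero_mul_ite_zero]
  refine if_congr ?_ (swapLow_prodPMF p i (ω₁, ω₂)).symm rfl
  constructor
  · rintro ⟨⟨h1, ⟨h2, h3, h4, h5⟩, h6⟩, k2, k3, k4, k5⟩
    have hx : ∀ j, i ≤ j → (ω₁ j).1 = (ω₂ j).1 := fun j hj =>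
      (congrFun h3 ⟨j, hj⟩).trans (congrFun k3 ⟨j, hj⟩).symm
    have hy : ∀ j, j < i → (ω₁ j).2 = (ω₂ j).2 := fun j hj =>
      (congrFun h4 ⟨j, hj⟩).trans (congrFun k4 ⟨j, hj⟩).symm
    obtain ⟨e1, e2, e3, e4⟩ := swapLow_comps i ω₁ ω₂ hx hy
    refine ⟨⟨?_, ?_, ?_, ?_, ?_⟩, ⟨?_, ?_, ?_, ?_⟩, ?_⟩
    · rw [swapLow_fst_apply_self]; exact h1
    · rw [e1]; exact k2
    · exact funext fun j => (congrFun e1 j.1).trans (congrFun k3 j)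
    · exact funext fun j => (congrFun e2 j.1).trans (congrFun h4 j)
    · rw [e1, e2, k2]; rw [h2] at h5; exact h5
    · rw [e3]; exact h2
    · exact funext fun j => (congrFun e3 j.1).trans (congrFun h3 j)
    · exact funext fun j => (congrFun e4 j.1).trans (congrFun k4 j)
    · rw [e3, e4, h2]; rw [k2] at k5; exact k5
    · rw [e3]; exact h6
  · rintro ⟨⟨h1, h2, h3, h4, h5⟩, ⟨k2, k3, k4, k5⟩, k6⟩
    have hx : ∀ j, i ≤ j →
        ((swapLow i (ω₁, ω₂)).1 j).1 = ((swapLow i (ω₁, ω₂)).2 j).1 := fun j hj =>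
      (congrFun h3 ⟨j, hj⟩).trans (congrFun k3 ⟨j, hj⟩).symm
    have hy : ∀ j, j < i →
        ((swapLow i (ω₁, ω₂)).1 j).2 = ((swapLow i (ω₁, ω₂)).2 j).2 := fun j hj =>
      (congrFun h4 ⟨j, hj⟩).trans (congrFun k4 ⟨j, hj⟩).symm
    obtain ⟨e1, e2, e3, e4⟩ := swapLow_comps i _ _ hx hy
    have hq : swapLow i ((swapLow i (ω₁, ω₂)).1, (swapLow i (ω₁, ω₂)).2) = (ω₁, ω₂) :=
      swapLow_invol i (ω₁, ω₂)
    rw [hq] at e1 e2 e3 e4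
    replace e1 : (fun j => (ω₁ j).1) = fun j => ((swapLow i (ω₁, ω₂)).2 j).1 := e1
    replace e2 : (fun j => (ω₁ j).2) = fun j => ((swapLow i (ω₁, ω₂)).1 j).2 := e2
    replace e3 : (fun j => (ω₂ j).1) = fun j => ((swapLow i (ω₁, ω₂)).1 j).1 := e3
    replace e4 : (fun j => (ω₂ j).2) = fun j => ((swapLow i (ω₁, ω₂)).2 j).2 := e4
    rw [swapLow_fst_apply_self] at h1
    refine ⟨⟨h1, ⟨?_, ?_, ?_, ?_⟩, ?_⟩, ?_, ?_, ?_, ?_⟩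
    · rw [e1]; exact k2
    · exact funext fun j => (congrFun e1 j.1).trans (congrFun k3 j)
    · exact funext fun j => (congrFun e2 j.1).trans (congrFun h4 j)
    · rw [e1, e2, k2]; rw [h2] at h5; exact h5
    · rw [e1]; exact k6
    · rw [e3]; exact h2
    · exact funext fun j => (congrFun e3 j.1).trans (congrFun h3 j)
    · exact funext fun j => (congrFun e4 j.1).trans (congrFun k4 j)
    · rw [e3, e4, h2]; rw [k2] at k5; exact k5
end

section
/- Supports of W are independent sets of the conditional characteristic graph (final step in the converse of Theorem 2). Let X, U, Y, W be finite-valued random variables with joint pmf p and let f : 𝒳×𝒴 → ℱ. Assume the Markov chain X−(U,Y)−W holds (X and W conditionally independent given (U,Y)) and H(f(X,Y) | X, U, W) = 0. Then for all u, y_1, y_2, x, w: if p(u,y_1,w) > 0, p(u,y_2,w) > 0, p(x,u,y_1) > 0 and p(x,u,y_2) > 0, then f(x,y_1) = f(x,y_2). Equivalently, for every w with P(W=w)>0, the set {(u,y) : p(u,y,w) > 0} is an independent set of the conditional characteristic graph G_{U,Y|X,U}(f). -/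
open scoped BigOperators Classical

section Aux

variable {Ω : Type*} [Fintype Ω]

lemma pm_nonneg {α : Type*} {μ : Ω → ℝ} (hμ : ∀ ω, 0 ≤ μ ω) (Z : Ω → α) (z : α) :
    0 ≤ pm μ Z z :=
  Finset.sum_nonneg fun ω _ => by split <;> simp [hμ ω]

lemma pm_pos_iff {α : Type*} {μ : Ω → ℝ} (hμ : ∀ ω, 0 ≤ μ ω) (Z : Ω → α) (z : α) :
    0 < pm μ Z z ↔ ∃ ω, Z ω = z ∧ 0 < μ ω := by
  constructor
  · intro h
    by_contra hc
    push_neg at hc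
    have hle : pm μ Z z ≤ 0 := by
      apply Finset.sum_nonpos
      intro ω _
      split
      · next hz => exact hc ω hz
      · exact le_refl 0
    linarith
  · rintro ⟨ω, hz, hpos⟩
    have hle : μ ω ≤ pm μ Z z := by
      have h2 := Finset.single_le_sum (f := fun ω' => if Z ω' = z then μ ω' else 0)
        (fun ω' _ => by split <;> simp [hμ ω']) (Finset.mem_univ ω)
      simpa [hz, pm] using h2
    linarith

lemma pm_marginal {α β : Type*} [Fintype α] (μ : Ω → ℝ) (A : Ω → α) (B : Ω → β) (b : β) :
    pm μ B b = ∑ a, pm μ (fun ω => (A ω, B ω)) (a, b) := by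
  unfold pm
  rw [Finset.sum_comm]
  apply Finset.sum_congr rfl
  intro ω _
  by_cases hb : B ω = b
  · rw [Finset.sum_eq_single (A ω)]
    · simp [hb]
    · intro a _ ha
      simp [Prod.ext_iff, Ne.symm ha]
    · simp
  · simp [hb, Prod.ext_iff]

lemma pm_le_marginal {α β : Type*} [Fintype α] {μ : Ω → ℝ} (hμ : ∀ ω, 0 ≤ μ ω)
    (A : Ω → α) (B : Ω → β) (a : α) (b : β) :
    pm μ (fun ω => (A ω, B ω)) (a, b) ≤ pm μ B b := by
  rw [pm_marginal μ A B b]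
  exact Finset.single_le_sum (f := fun a' => pm μ (fun ω => (A ω, B ω)) (a', b))
    (fun a' _ => pm_nonneg hμ _ _) (Finset.mem_univ a)

/-- If `H(A|B) = 0` then whenever `p(a,b) > 0` one has `p(a,b) = p(b)`. -/
lemma condEnt_zero_det {α β : Type*} [Fintype α] [Fintype β] {μ : Ω → ℝ}
    (hμ : IsPMF μ) {A : Ω → α} {B : Ω → β} (h : condEnt μ A B = 0) :
    ∀ a b, 0 < pm μ (fun ω => (A ω, B ω)) (a, b) →
      pm μ (fun ω => (A ω, B ω)) (a, b) = pm μ B b := by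
  set q : α × β → ℝ := pm μ (fun ω => (A ω, B ω)) with hq
  have hqnn : ∀ p, 0 ≤ q p := fun p => pm_nonneg hμ.1 _ _
  have hBeq : ∑ b, pm μ B b * Real.logb 2 (pm μ B b)
      = ∑ p : α × β, q p * Real.logb 2 (pm μ B p.2) := by
    rw [Fintype.sum_prod_type, Finset.sum_comm]
    apply Finset.sum_congr rfl
    intro b _
    have hr : ∑ x, q (x, b) * Real.logb 2 (pm μ B (x, b).2)
        = ∑ x, q (x, b) * Real.logb 2 (pm μ B b) := rfl
    rw [hr, ← Finset.sum_mul, ← pm_marginal μ A B b]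
  have key : condEnt μ A B
      = ∑ p : α × β, q p * (Real.logb 2 (pm μ B p.2) - Real.logb 2 (q p)) := by
    unfold condEnt ent
    rw [hBeq, ← hq]
    simp only [mul_sub, Finset.sum_sub_distrib]
    ring
  have hterm : ∀ p : α × β, 0 ≤ q p * (Real.logb 2 (pm μ B p.2) - Real.logb 2 (q p)) := by
    intro p
    rcases eq_or_lt_of_le (hqnn p) with hz | hpos
    · simp [← hz]
    · apply mul_nonneg (le_of_lt hpos)
      have hle : q p ≤ pm μ B p.2 := pm_le_marginal hμ.1 A B p.1 p.2
      have := Real.logb_le_logb_of_le (b := 2) (by norm_num) hpos hle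
      linarith
  have hzero : ∀ p ∈ (Finset.univ : Finset (α × β)),
      q p * (Real.logb 2 (pm μ B p.2) - Real.logb 2 (q p)) = 0 := by
    rw [← Finset.sum_eq_zero_iff_of_nonneg (fun p _ => hterm p)]
    rw [← key, h]
  intro a b hpos
  have h0 := hzero (a, b) (Finset.mem_univ _)
  have hne : q (a, b) ≠ 0 := ne_of_gt hpos
  have hlogeq : Real.logb 2 (pm μ B b) = Real.logb 2 (q (a, b)) := by
    rcases mul_eq_zero.mp h0 with h1 | h1
    · exact absurd h1 hne
    · linarith
  have hle : q (a, b) ≤ pm μ B b := pm_le_marginal hμ.1 A B a b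
  rcases eq_or_lt_of_le hle with heq | hlt
  · exact heq
  · exfalso
    have := Real.logb_lt_logb (by norm_num : (1:ℝ) < 2) hpos hlt
    linarith

/-- If `H(A|B) = 0` then `A` is determined by `B` on the support. -/
lemma condEnt_zero_unique {α β : Type*} [Fintype α] [Fintype β] {μ : Ω → ℝ}
    (hμ : IsPMF μ) {A : Ω → α} {B : Ω → β} (h : condEnt μ A B = 0)
    {a₁ a₂ : α} {b : β}
    (h₁ : 0 < pm μ (fun ω => (A ω, B ω)) (a₁, b))
    (h₂ : 0 < pm μ (fun ω => (A ω, B ω)) (a₂, b)) : a₁ = a₂ := by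
  by_contra hne
  have e₁ := condEnt_zero_det hμ h a₁ b h₁
  have e₂ := condEnt_zero_det hμ h a₂ b h₂
  have hsum : pm μ (fun ω => (A ω, B ω)) (a₁, b) + pm μ (fun ω => (A ω, B ω)) (a₂, b)
      ≤ pm μ B b := by
    rw [pm_marginal μ A B b]
    have : ∑ a ∈ ({a₁, a₂} : Finset α), pm μ (fun ω => (A ω, B ω)) (a, b)
        = pm μ (fun ω => (A ω, B ω)) (a₁, b) + pm μ (fun ω => (A ω, B ω)) (a₂, b) :=
      Finset.sum_pair hne
    rw [← this]
    exact Finset.sum_le_sum_of_subset_of_nonneg (Finset.subset_univ _)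
      (fun a _ _ => pm_nonneg hμ.1 _ _)
  rw [e₁, e₂] at hsum
  have hBpos : 0 < pm μ B b := by rw [← e₁]; exact h₁
  linarith

end Aux

/-- **Final step in the converse of Theorem 2.** If `X − (U,Y) − W` is a Markov chain and
`H(f(X,Y) | X,U,W) = 0`, then whenever `p(u,y₁,w) > 0`, `p(u,y₂,w) > 0`, `p(x,u,y₁) > 0`
and `p(x,u,y₂) > 0` one has `f(x,y₁) = f(x,y₂)`; i.e. the support of each value `w` of `W`
is an independent set of the conditional characteristic graph `G_{U,Y|X,U}(f)`. -/
theorem support_of_W_is_independent_set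
    {Ω 𝒳 𝒰 𝒴 𝒲 ℱ : Type*}
    [Fintype Ω] [Fintype 𝒳] [Fintype 𝒰] [Fintype 𝒴] [Fintype 𝒲] [Fintype ℱ]
    (μ : Ω → ℝ) (hμ : IsPMF μ)
    (X : Ω → 𝒳) (U : Ω → 𝒰) (Y : Ω → 𝒴) (W : Ω → 𝒲) (f : 𝒳 × 𝒴 → ℱ)
    -- Markov chain X − (U,Y) − W
    (hMarkov : CondIndepRV μ X (fun ω => (U ω, Y ω)) W)
    -- H(f(X,Y) | X, U, W) = 0
    (hdet : condEnt μ (fun ω => f (X ω, Y ω)) (fun ω => (X ω, U ω, W ω)) = 0) :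
    ∀ u y₁ y₂ x w,
      0 < pm μ (fun ω => (U ω, Y ω, W ω)) (u, y₁, w) →
      0 < pm μ (fun ω => (U ω, Y ω, W ω)) (u, y₂, w) →
      0 < pm μ (fun ω => (X ω, U ω, Y ω)) (x, u, y₁) →
      0 < pm μ (fun ω => (X ω, U ω, Y ω)) (x, u, y₂) →
      f (x, y₁) = f (x, y₂) := by
  intro u y₁ y₂ x w h1 h2 h3 h4
  have hnn := hμ.1
  have key : ∀ y, 0 < pm μ (fun ω => (U ω, Y ω, W ω)) (u, y, w) →
      0 < pm μ (fun ω => (X ω, U ω, Y ω)) (x, u, y) →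
      ∃ ω, X ω = x ∧ U ω = u ∧ Y ω = y ∧ W ω = w ∧ 0 < μ ω := by
    intro y hyw hxy
    have hM := hMarkov x (u, y) w
    obtain ⟨ω₁, hω₁, hμ₁⟩ := (pm_pos_iff hnn _ _).mp hxy
    obtain ⟨ω₂, hω₂, hμ₂⟩ := (pm_pos_iff hnn _ _).mp hyw
    simp only [Prod.mk.injEq] at hω₁ hω₂
    have hUY : 0 < pm μ (fun ω => (U ω, Y ω)) (u, y) :=
      (pm_pos_iff hnn _ _).mpr ⟨ω₁, by simp [hω₁.2.1, hω₁.2.2], hμ₁⟩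
    have hXUY : 0 < pm μ (fun ω => (X ω, U ω, Y ω)) (x, u, y) := hxy
    have hUYW : 0 < pm μ (fun ω => ((U ω, Y ω), W ω)) ((u, y), w) :=
      (pm_pos_iff hnn _ _).mpr ⟨ω₂, by simp [hω₂.1, hω₂.2.1, hω₂.2.2], hμ₂⟩
    have hA : 0 < pm μ (fun ω => (X ω, (U ω, Y ω), W ω)) (x, (u, y), w) := by
      have hprod := mul_pos hXUY hUYW
      have hAnn : 0 ≤ pm μ (fun ω => (X ω, (U ω, Y ω), W ω)) (x, (u, y), w) :=
        pm_nonneg hnn _ _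
      nlinarith [hM]
    obtain ⟨ω, hω, hμω⟩ := (pm_pos_iff hnn _ _).mp hA
    simp only [Prod.mk.injEq] at hω
    exact ⟨ω, hω.1, hω.2.1.1, hω.2.1.2, hω.2.2, hμω⟩
  obtain ⟨ω₁, hX1, hU1, hY1, hW1, hμ1⟩ := key y₁ h1 h3
  obtain ⟨ω₂, hX2, hU2, hY2, hW2, hμ2⟩ := key y₂ h2 h4
  have p1 : 0 < pm μ (fun ω => (f (X ω, Y ω), (X ω, U ω, W ω))) (f (x, y₁), (x, u, w)) :=
    (pm_pos_iff hnn _ _).mpr ⟨ω₁, by simp [hX1, hU1, hY1, hW1], hμ1⟩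
  have p2 : 0 < pm μ (fun ω => (f (X ω, Y ω), (X ω, U ω, W ω))) (f (x, y₂), (x, u, w)) :=
    (pm_pos_iff hnn _ _).mpr ⟨ω₂, by simp [hX2, hU2, hY2, hW2], hμ2⟩
  exact condEnt_zero_unique hμ hdet p1 p2
end
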